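/- arXiv:0901.0824 — 7 statements merged into one kernel-verified Lean document; each statement's English description precedes it below -/
import Mathlib

section
/- Suppose the gain matrix V is irreducible and φ satisfies (A.2) and (A.3). Then a point q lies on the boundary ∂F of the feasible QoS region F if and only if there exists a vector w ∈ ℝ^K with all entries strictly positive such that q maximizes the linear functional x ↦ wᵀx over F, i.e., wᵀx ≤ wᵀq for all x ∈ F. -/
open Matrix

/-- A nonnegative square matrix is irreducible. -/
def MatIrred {m : Type*} [Fintype m] (M : Matrix m m ℝ) : Prop :=
  ∀ S : Set m, S.Nonempty → S ≠ Set.univ → ∃ i ∈ S, ∃ j ∉ S, 0 < M i j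

/-- Spectral radius of a real square matrix (largest modulus of a complex eigenvalue). -/
noncomputable def specRad {m : Type*} [Fintype m] [DecidableEq m] (M : Matrix m m ℝ) : ℝ :=
  sSup ((fun w : ℂ => ‖w‖) '' spectrum ℂ (M.map fun x => (x : ℂ)))

/-- SIR of link `k` under power vector `p`. -/
noncomputable def SIR {K : ℕ} (V : Matrix (Fin K) (Fin K) ℝ) (z : Fin K → ℝ)
    (p : Fin K → ℝ) (k : Fin K) : ℝ :=
  p k / (V.mulVec p k + z k)

/-- The polytope of admissible power vectors. -/
def Pset {K N : ℕ} (C : Matrix (Fin N) (Fin K) ℝ) (phat : Fin N → ℝ) :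
    Set (Fin K → ℝ) :=
  {p | (∀ k, 0 ≤ p k) ∧ ∀ n, C.mulVec p n ≤ phat n}

/-- Admissible power vectors with all entries positive. -/
def Pplus {K N : ℕ} (C : Matrix (Fin N) (Fin K) ℝ) (phat : Fin N → ℝ) :
    Set (Fin K → ℝ) :=
  {p ∈ Pset C phat | ∀ k, 0 < p k}

/-- Normalized power-constraint functions `gₙ(p) = cₙᵀ p / Pₙ`. -/
noncomputable def gcon {K N : ℕ} (C : Matrix (Fin N) (Fin K) ℝ) (phat : Fin N → ℝ)
    (n : Fin N) (p : Fin K → ℝ) : ℝ :=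
  C.mulVec p n / phat n

/-- The matrices `B⁽ⁿ⁾ = Γ (V + (1/Pₙ) z cₙᵀ)`. -/
noncomputable def Bmat {K N : ℕ} (V : Matrix (Fin K) (Fin K) ℝ) (z : Fin K → ℝ)
    (γ : Fin K → ℝ) (C : Matrix (Fin N) (Fin K) ℝ) (phat : Fin N → ℝ) (n : Fin N) :
    Matrix (Fin K) (Fin K) ℝ :=
  Matrix.diagonal γ * (V + (phat n)⁻¹ • Matrix.vecMulVec z (C n))

/-- The extended `(K+1)×(K+1)` matrices `A⁽ⁿ⁾`. -/
noncomputable def Amat {K N : ℕ} (V : Matrix (Fin K) (Fin K) ℝ) (z : Fin K → ℝ)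
    (γ : Fin K → ℝ) (C : Matrix (Fin N) (Fin K) ℝ) (phat : Fin N → ℝ) (n : Fin N) :
    Matrix (Fin (K+1)) (Fin (K+1)) ℝ :=
  Matrix.of fun i j =>
    if hi : (i : ℕ) < K then
      if hj : (j : ℕ) < K then γ ⟨i, hi⟩ * V ⟨i, hi⟩ ⟨j, hj⟩
      else γ ⟨i, hi⟩ * z ⟨i, hi⟩
    else
      if hj : (j : ℕ) < K then (phat n)⁻¹ * ∑ k, C n k * (γ k * V k ⟨j, hj⟩)
      else (phat n)⁻¹ * ∑ k, C n k * (γ k * z k)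

/-- `pbar` is a max-min SIR-balanced power vector: it maximizes
`p ↦ min_k SIR_k(p)/γ_k` over the set `P`. -/
def MaxMinBalanced {K N : ℕ} (V : Matrix (Fin K) (Fin K) ℝ) (z : Fin K → ℝ)
    (γ : Fin K → ℝ) (C : Matrix (Fin N) (Fin K) ℝ) (phat : Fin N → ℝ)
    (pbar : Fin K → ℝ) : Prop :=
  pbar ∈ Pset C phat ∧
    ∀ p ∈ Pset C phat, (⨅ k, SIR V z p k / γ k) ≤ ⨅ k, SIR V z pbar k / γ k

/-- The set `N₀(p)` of active power constraints. -/
def activeSet {K N : ℕ} (C : Matrix (Fin N) (Fin K) ℝ) (phat : Fin N → ℝ)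
    (p : Fin K → ℝ) : Set (Fin N) :=
  {n | gcon C phat n p = 1 ∧ ∀ m, gcon C phat m p ≤ gcon C phat n p}

/-- The (relatively open) probability simplex `Π⁺_K`. -/
def PosSimplex (K : ℕ) : Set (Fin K → ℝ) :=
  {w | (∀ k, 0 < w k) ∧ ∑ k, w k = 1}

/-- The feasible QoS region `F`. -/
def QoSRegion {K N : ℕ} (V : Matrix (Fin K) (Fin K) ℝ) (z : Fin K → ℝ)
    (γ : Fin K → ℝ) (C : Matrix (Fin N) (Fin K) ℝ) (phat : Fin N → ℝ)
    (φ : ℝ → ℝ) : Set (Fin K → ℝ) :=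
  {q | ∃ p ∈ Pplus C phat, ∀ k, q k = φ (SIR V z p k / γ k)}


namespace QoSAux

open Filter Topology Set

variable {K N : ℕ}

/-- One interference-update map `p ↦ (β k * ((V p)_k + z_k))_k`. -/
noncomputable def Umap (V : Matrix (Fin K) (Fin K) ℝ) (z β p : Fin K → ℝ) : Fin K → ℝ :=
  fun k => β k * (V.mulVec p k + z k)

lemma mulVec_eq {a b : ℕ} (V : Matrix (Fin a) (Fin b) ℝ) (p : Fin b → ℝ) (k : Fin a) :
    V.mulVec p k = ∑ j, V k j * p j := by
  simp [Matrix.mulVec, dotProduct]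

lemma mulVec_nonneg {a b : ℕ} {V : Matrix (Fin a) (Fin b) ℝ} (hV : ∀ i j, 0 ≤ V i j)
    {p : Fin b → ℝ} (hp : ∀ k, 0 ≤ p k) (k : Fin a) : 0 ≤ V.mulVec p k := by
  rw [mulVec_eq]
  exact Finset.sum_nonneg fun j _ => mul_nonneg (hV k j) (hp j)

lemma mulVec_mono {a b : ℕ} {V : Matrix (Fin a) (Fin b) ℝ} (hV : ∀ i j, 0 ≤ V i j)
    {p p' : Fin b → ℝ} (h : ∀ j, p j ≤ p' j) (k : Fin a) :
    V.mulVec p k ≤ V.mulVec p' k := by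
  rw [mulVec_eq, mulVec_eq]
  exact Finset.sum_le_sum fun j _ => mul_le_mul_of_nonneg_left (h j) (hV k j)

lemma cont_mulVec {a b : ℕ} (V : Matrix (Fin a) (Fin b) ℝ) (k : Fin a) :
    Continuous fun p : Fin b → ℝ => V.mulVec p k := by
  simp only [mulVec_eq]
  exact continuous_finset_sum _ fun j _ => continuous_const.mul (continuous_apply j)

lemma Umap_mono {V : Matrix (Fin K) (Fin K) ℝ} (hV : ∀ i j, 0 ≤ V i j)
    {β : Fin K → ℝ} (hβ : ∀ k, 0 ≤ β k) {z p p' : Fin K → ℝ}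
    (h : ∀ j, p j ≤ p' j) (k : Fin K) : Umap V z β p k ≤ Umap V z β p' k := by
  unfold Umap
  nlinarith [mulVec_mono hV h k, hβ k]

lemma Pset_isClosed (C : Matrix (Fin N) (Fin K) ℝ) (phat : Fin N → ℝ) :
    IsClosed (Pset C phat) := by
  have h1 : IsClosed {p : Fin K → ℝ | ∀ k, 0 ≤ p k} := by
    rw [Set.setOf_forall]
    exact isClosed_iInter fun k => isClosed_le continuous_const (continuous_apply k)
  have h2 : IsClosed {p : Fin K → ℝ | ∀ n, C.mulVec p n ≤ phat n} := by
    rw [Set.setOf_forall]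
    exact isClosed_iInter fun n => isClosed_le (cont_mulVec C n) continuous_const
  have : Pset C phat = {p : Fin K → ℝ | ∀ k, 0 ≤ p k} ∩
      {p : Fin K → ℝ | ∀ n, C.mulVec p n ≤ phat n} := by
    ext p; simp [Pset, Set.mem_setOf_eq, Set.mem_inter_iff]
  rw [this]; exact h1.inter h2

lemma Pset_isCompact {C : Matrix (Fin N) (Fin K) ℝ} {phat : Fin N → ℝ}
    (hC : ∀ n k, C n k = 0 ∨ C n k = 1) (hCcol : ∀ k, ∃ n, C n k = 1) :
    IsCompact (Pset C phat) := by
  have hC0 : ∀ n k, 0 ≤ C n k := by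
    intro n k; rcases hC n k with h | h <;> simp [h]
  classical
  set B : Fin K → ℝ := fun k => phat (hCcol k).choose with hB
  have hsub : Pset C phat ⊆ Set.Icc 0 B := by
    intro p hp
    constructor
    · intro k; exact hp.1 k
    · intro k
      have hn := (hCcol k).choose_spec
      set n := (hCcol k).choose
      have h1 : p k ≤ C.mulVec p n := by
        rw [mulVec_eq C p n]
        have h0 : C n k * p k = p k := by rw [hn, one_mul]
        rw [← h0]
        exact Finset.single_le_sum (fun j _ => mul_nonneg (hC0 n j) (hp.1 j))
          (Finset.mem_univ k)
      exact h1.trans (hp.2 n)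
  exact IsCompact.of_isClosed_subset isCompact_Icc (Pset_isClosed C phat) hsub

/-- Monotone iteration from a subsolution converges to a fixed point below it. -/
lemma exists_fixpt {V : Matrix (Fin K) (Fin K) ℝ} {z β : Fin K → ℝ}
    {C : Matrix (Fin N) (Fin K) ℝ} {phat : Fin N → ℝ}
    (hV : ∀ i j, 0 ≤ V i j) (hz : ∀ k, 0 < z k) (hβ : ∀ k, 0 < β k)
    (hC0 : ∀ n k, 0 ≤ C n k)
    {p₀ : Fin K → ℝ} (hp₀ : p₀ ∈ Pset C phat) (hsub : ∀ k, Umap V z β p₀ k ≤ p₀ k) :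
    ∃ pb ∈ Pset C phat, (∀ k, pb k ≤ p₀ k) ∧ (∀ k, Umap V z β pb k = pb k) ∧
      Tendsto (fun n => (Umap V z β)^[n] p₀) atTop (𝓝 pb) ∧
      (∀ n, (Umap V z β)^[n] p₀ ∈ Pset C phat) := by
  set it : ℕ → Fin K → ℝ := fun n => (Umap V z β)^[n] p₀ with hit
  have hit_succ : ∀ n, it (n + 1) = Umap V z β (it n) := by
    intro n; simp only [hit, Function.iterate_succ_apply']
  have hdec : ∀ n k, it (n + 1) k ≤ it n k := by
    intro n
    induction n with
    | zero => intro k; simpa [hit] using hsub k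
    | succ n ih =>
      intro k
      have h := Umap_mono hV (fun j => (hβ j).le) (z := z) ih k
      rw [← hit_succ (n+1), ← hit_succ n] at h
      exact h
  have hmem : ∀ n, it n ∈ Pset C phat := by
    intro n
    induction n with
    | zero => simpa [hit] using hp₀
    | succ n ih =>
      constructor
      · intro k
        rw [hit_succ]
        exact mul_nonneg (hβ k).le
          (add_nonneg (mulVec_nonneg hV ih.1 k) (hz k).le)
      · intro m
        have h1 : C.mulVec (it (n+1)) m ≤ C.mulVec (it n) m :=
          mulVec_mono hC0 (hdec n) m
        exact h1.trans (ih.2 m)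
  set pb : Fin K → ℝ := fun k => ⨅ n, it n k with hpb
  have hbdd : ∀ k, BddBelow (Set.range fun n => it n k) := by
    intro k
    exact ⟨0, by rintro y ⟨n, rfl⟩; exact (hmem n).1 k⟩
  have hanti : ∀ k, Antitone fun n => it n k := fun k =>
    antitone_nat_of_succ_le fun n => hdec n k
  have htendk : ∀ k, Tendsto (fun n => it n k) atTop (𝓝 (pb k)) := fun k =>
    tendsto_atTop_ciInf (hanti k) (hbdd k)
  have htend : Tendsto it atTop (𝓝 pb) := tendsto_pi_nhds.mpr htendk
  have hTcont : Continuous (Umap V z β) := by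
    refine continuous_pi fun k => ?_
    exact continuous_const.mul ((cont_mulVec V k).add continuous_const)
  have hfix : Umap V z β pb = pb := by
    have h1 : Tendsto (fun n => it (n + 1)) atTop (𝓝 pb) :=
      htend.comp (tendsto_add_atTop_nat 1)
    have h2 : Tendsto (fun n => Umap V z β (it n)) atTop (𝓝 (Umap V z β pb)) :=
      (hTcont.tendsto pb).comp htend
    have h3 : (fun n => it (n + 1)) = fun n => Umap V z β (it n) := funext hit_succ
    rw [h3] at h1
    exact tendsto_nhds_unique h2 h1
  have hpbmem : pb ∈ Pset C phat :=
    (Pset_isClosed C phat).mem_of_tendsto htend (Filter.Eventually.of_forall hmem)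
  refine ⟨pb, hpbmem, ?_, ?_, htend, hmem⟩
  · intro k
    exact (ciInf_le (hbdd k) 0).trans (by simp [hit])
  · intro k
    exact congrFun hfix k

section Gfacts

variable {φ g : ℝ → ℝ}

lemma g_pos (hginv : ∀ x ∈ Set.Ioi (0:ℝ), g (φ x) = x) {y : ℝ}
    (hy : y ∈ φ '' Set.Ioi 0) : 0 < g y := by
  obtain ⟨x, hx, rfl⟩ := hy
  rw [hginv x hx]; exact hx

lemma g_lt (hφmono : StrictMonoOn φ (Set.Ioi 0))
    (hginv : ∀ x ∈ Set.Ioi (0:ℝ), g (φ x) = x) {y₁ y₂ : ℝ}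
    (h₁ : y₁ ∈ φ '' Set.Ioi 0) (h₂ : y₂ ∈ φ '' Set.Ioi 0) (h : y₁ < y₂) :
    g y₁ < g y₂ := by
  obtain ⟨x₁, hx₁, rfl⟩ := h₁
  obtain ⟨x₂, hx₂, rfl⟩ := h₂
  rw [hginv x₁ hx₁, hginv x₂ hx₂]
  exact (hφmono.lt_iff_lt hx₁ hx₂).mp h

lemma g_le (hφmono : StrictMonoOn φ (Set.Ioi 0))
    (hginv : ∀ x ∈ Set.Ioi (0:ℝ), g (φ x) = x) {y₁ y₂ : ℝ}
    (h₁ : y₁ ∈ φ '' Set.Ioi 0) (h₂ : y₂ ∈ φ '' Set.Ioi 0) (h : y₁ ≤ y₂) :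
    g y₁ ≤ g y₂ := by
  obtain ⟨x₁, hx₁, rfl⟩ := h₁
  obtain ⟨x₂, hx₂, rfl⟩ := h₂
  rw [hginv x₁ hx₁, hginv x₂ hx₂]
  exact (hφmono.le_iff_le hx₁ hx₂).mp h

end Gfacts

section Fchar

variable {V : Matrix (Fin K) (Fin K) ℝ} {z γ : Fin K → ℝ}
  {C : Matrix (Fin N) (Fin K) ℝ} {phat : Fin N → ℝ} {φ g : ℝ → ℝ}

/-- A feasible QoS vector comes with an exact positive fixed point. -/
lemma F_fix (hV : ∀ i j, 0 ≤ V i j) (hz : ∀ k, 0 < z k) (hγ : ∀ k, 0 < γ k)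
    (hginv : ∀ x ∈ Set.Ioi (0:ℝ), g (φ x) = x)
    {q : Fin K → ℝ} (hq : q ∈ QoSRegion V z γ C phat φ) :
    ∃ p ∈ Pset C phat, (∀ k, 0 < p k) ∧ (∀ k, q k ∈ φ '' Set.Ioi 0) ∧
      (∀ k, γ k * g (q k) * (V.mulVec p k + z k) = p k) := by
  obtain ⟨p, ⟨hpP, hppos⟩, hqeq⟩ := hq
  have hD : ∀ k, 0 < V.mulVec p k + z k := fun k =>
    add_pos_of_nonneg_of_pos (mulVec_nonneg hV (fun j => (hppos j).le) k) (hz k)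
  have hs : ∀ k, SIR V z p k / γ k ∈ Set.Ioi (0:ℝ) := by
    intro k
    exact div_pos (div_pos (hppos k) (hD k)) (hγ k)
  refine ⟨p, hpP, hppos, fun k => ⟨_, hs k, (hqeq k).symm⟩, fun k => ?_⟩
  have hg : g (q k) = SIR V z p k / γ k := by rw [hqeq k, hginv _ (hs k)]
  have hD' := (hD k).ne'
  have hγ' := (hγ k).ne'
  rw [hg]
  unfold SIR
  calc γ k * (p k / (V.mulVec p k + z k) / γ k) * (V.mulVec p k + z k)
      = p k * ((V.mulVec p k + z k) / (V.mulVec p k + z k)) * (γ k / γ k) := by ring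
    _ = p k := by rw [div_self hD', div_self hγ']; ring

/-- Characterization of the feasible QoS region via subsolutions. -/
lemma mem_F_iff (hV : ∀ i j, 0 ≤ V i j) (hz : ∀ k, 0 < z k) (hγ : ∀ k, 0 < γ k)
    (hC : ∀ n k, C n k = 0 ∨ C n k = 1)
    (hginv : ∀ x ∈ Set.Ioi (0:ℝ), g (φ x) = x)
    (hφg : ∀ y ∈ φ '' Set.Ioi 0, φ (g y) = y) (q : Fin K → ℝ) :
    q ∈ QoSRegion V z γ C phat φ ↔
      (∀ k, q k ∈ φ '' Set.Ioi 0) ∧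
        ∃ p ∈ Pset C phat, ∀ k, γ k * g (q k) * (V.mulVec p k + z k) ≤ p k := by
  have hC0 : ∀ n k, 0 ≤ C n k := by
    intro n k; rcases hC n k with h | h <;> simp [h]
  constructor
  · intro hq
    obtain ⟨p, hpP, hppos, hQ, hfix⟩ := F_fix hV hz hγ hginv hq
    exact ⟨hQ, p, hpP, fun k => (hfix k).le⟩
  · rintro ⟨hQ, p₀, hp₀, hsub⟩
    set β : Fin K → ℝ := fun k => γ k * g (q k) with hβdef
    have hβ : ∀ k, 0 < β k := fun k => mul_pos (hγ k) (g_pos hginv (hQ k))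
    obtain ⟨pb, hpbP, hpble, hpbfix, -, -⟩ :=
      exists_fixpt hV hz hβ hC0 hp₀ (fun k => hsub k)
    have hD : ∀ k, 0 < V.mulVec pb k + z k := fun k =>
      add_pos_of_nonneg_of_pos (mulVec_nonneg hV hpbP.1 k) (hz k)
    have hpbpos : ∀ k, 0 < pb k := by
      intro k
      rw [← hpbfix k]
      exact mul_pos (hβ k) (hD k)
    refine ⟨pb, ⟨hpbP, hpbpos⟩, fun k => ?_⟩
    have h1 : SIR V z pb k / γ k = g (q k) := by
      have hD' := (hD k).ne'
      have hγ' := (hγ k).ne'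
      unfold SIR
      rw [← hpbfix k]
      unfold Umap
      calc γ k * g (q k) * (V.mulVec pb k + z k) / (V.mulVec pb k + z k) / γ k
          = g (q k) * ((V.mulVec pb k + z k) / (V.mulVec pb k + z k)) * (γ k / γ k) := by
            ring
        _ = g (q k) := by rw [div_self hD', div_self hγ']; ring
    rw [h1, hφg _ (hQ k)]

end Fchar

section Holder

variable {a b : ℝ}

lemma holder_two (ha : 0 < a) (hb : 0 < b) (hab : a + b = 1)
    {x y u v : ℝ} (hx : 0 ≤ x) (hy : 0 ≤ y) (hu : 0 ≤ u) (hv : 0 ≤ v) :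
    x ^ a * y ^ b + u ^ a * v ^ b ≤ (x + u) ^ a * (y + v) ^ b := by
  rcases eq_or_lt_of_le (add_nonneg hx hu) with hX | hX
  · have hx0 : x = 0 := by linarith
    have hu0 : u = 0 := by linarith
    rw [hx0, hu0]
    simp [Real.zero_rpow ha.ne']
  rcases eq_or_lt_of_le (add_nonneg hy hv) with hY | hY
  · have hy0 : y = 0 := by linarith
    have hv0 : v = 0 := by linarith
    rw [hy0, hv0]
    simp [Real.zero_rpow hb.ne']
  set X := x + u
  set Y := y + v
  have key1 : (x / X) ^ a * (y / Y) ^ b ≤ a * (x / X) + b * (y / Y) :=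
    Real.geom_mean_le_arith_mean2_weighted ha.le hb.le
      (div_nonneg hx hX.le) (div_nonneg hy hY.le) hab
  have key2 : (u / X) ^ a * (v / Y) ^ b ≤ a * (u / X) + b * (v / Y) :=
    Real.geom_mean_le_arith_mean2_weighted ha.le hb.le
      (div_nonneg hu hX.le) (div_nonneg hv hY.le) hab
  have hsum : a * (x / X) + b * (y / Y) + (a * (u / X) + b * (v / Y)) = 1 := by
    have h1 : x / X + u / X = 1 := by
      rw [← add_div, div_self hX.ne']
    have h2 : y / Y + v / Y = 1 := by
      rw [← add_div, div_self hY.ne']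
    nlinarith [h1, h2]
  have hXa : (0:ℝ) < X ^ a := Real.rpow_pos_of_pos hX a
  have hYb : (0:ℝ) < Y ^ b := Real.rpow_pos_of_pos hY b
  have hrw1 : (x / X) ^ a * (y / Y) ^ b = x ^ a * y ^ b / (X ^ a * Y ^ b) := by
    rw [Real.div_rpow hx hX.le, Real.div_rpow hy hY.le]
    ring
  have hrw2 : (u / X) ^ a * (v / Y) ^ b = u ^ a * v ^ b / (X ^ a * Y ^ b) := by
    rw [Real.div_rpow hu hX.le, Real.div_rpow hv hY.le]
    ring
  have hcomb : (x ^ a * y ^ b + u ^ a * v ^ b) / (X ^ a * Y ^ b) ≤ 1 := by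
    rw [add_div, ← hrw1, ← hrw2]
    linarith
  calc x ^ a * y ^ b + u ^ a * v ^ b
      = (x ^ a * y ^ b + u ^ a * v ^ b) / (X ^ a * Y ^ b) * (X ^ a * Y ^ b) := by
        field_simp
    _ ≤ 1 * (X ^ a * Y ^ b) :=
        mul_le_mul_of_nonneg_right hcomb (by positivity)
    _ = X ^ a * Y ^ b := one_mul _

lemma holder_sum (ha : 0 < a) (hb : 0 < b) (hab : a + b = 1)
    {ι : Type*} (s : Finset ι) (f g : ι → ℝ)
    (hf : ∀ i ∈ s, 0 ≤ f i) (hg : ∀ i ∈ s, 0 ≤ g i) :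
    ∑ i ∈ s, f i ^ a * g i ^ b ≤ (∑ i ∈ s, f i) ^ a * (∑ i ∈ s, g i) ^ b := by
  classical
  induction s using Finset.cons_induction with
  | empty => simp [Real.zero_rpow ha.ne']
  | cons i s hi ih =>
    rw [Finset.sum_cons, Finset.sum_cons, Finset.sum_cons]
    have hf' : ∀ j ∈ s, 0 ≤ f j := fun j hj => hf j (Finset.mem_cons_of_mem hj)
    have hg' : ∀ j ∈ s, 0 ≤ g j := fun j hj => hg j (Finset.mem_cons_of_mem hj)
    have h1 := ih hf' hg'
    have h2 := holder_two ha hb hab (hf i (Finset.mem_cons_self i s))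
      (hg i (Finset.mem_cons_self i s))
      (Finset.sum_nonneg hf') (Finset.sum_nonneg hg')
    linarith

end Holder

section Convexity

variable {V : Matrix (Fin K) (Fin K) ℝ} {z γ : Fin K → ℝ}
  {C : Matrix (Fin N) (Fin K) ℝ} {phat : Fin N → ℝ} {φ g : ℝ → ℝ}

lemma g_comb (hglog : ConvexOn ℝ (φ '' Set.Ioi 0) fun y => Real.log (g y))
    (hginv : ∀ x ∈ Set.Ioi (0:ℝ), g (φ x) = x)
    {y₁ y₂ a b : ℝ} (h₁ : y₁ ∈ φ '' Set.Ioi 0) (h₂ : y₂ ∈ φ '' Set.Ioi 0)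
    (ha : 0 ≤ a) (hb : 0 ≤ b) (hab : a + b = 1) :
    g (a * y₁ + b * y₂) ≤ g y₁ ^ a * g y₂ ^ b := by
  have hmem : a * y₁ + b * y₂ ∈ φ '' Set.Ioi 0 := by
    have := hglog.1 h₁ h₂ ha hb hab
    simpa [smul_eq_mul] using this
  have hlog := hglog.2 h₁ h₂ ha hb hab
  simp only [smul_eq_mul] at hlog
  have hg1 : 0 < g y₁ := g_pos hginv h₁
  have hg2 : 0 < g y₂ := g_pos hginv h₂
  have hgm : 0 < g (a * y₁ + b * y₂) := g_pos hginv hmem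
  calc g (a * y₁ + b * y₂) = Real.exp (Real.log (g (a * y₁ + b * y₂))) :=
        (Real.exp_log hgm).symm
    _ ≤ Real.exp (a * Real.log (g y₁) + b * Real.log (g y₂)) := Real.exp_le_exp.mpr hlog
    _ = g y₁ ^ a * g y₂ ^ b := by
        rw [Real.exp_add, mul_comm a, mul_comm b, ← Real.rpow_def_of_pos hg1,
          ← Real.rpow_def_of_pos hg2]

lemma F_convex (hV : ∀ i j, 0 ≤ V i j) (hz : ∀ k, 0 < z k) (hγ : ∀ k, 0 < γ k)
    (hC : ∀ n k, C n k = 0 ∨ C n k = 1) (hphat : ∀ n, 0 < phat n)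
    (hginv : ∀ x ∈ Set.Ioi (0:ℝ), g (φ x) = x)
    (hφg : ∀ y ∈ φ '' Set.Ioi 0, φ (g y) = y)
    (hglog : ConvexOn ℝ (φ '' Set.Ioi 0) fun y => Real.log (g y)) :
    Convex ℝ (QoSRegion V z γ C phat φ) := by
  intro q₁ h₁ q₂ h₂ a b ha hb hab
  rcases eq_or_lt_of_le ha with ha0 | ha
  · have hb1 : b = 1 := by linarith
    rw [← ha0, hb1]
    simpa using h₂
  rcases eq_or_lt_of_le hb with hb0 | hb
  · have ha1 : a = 1 := by linarith
    rw [← hb0, ha1]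
    simpa using h₁
  rw [mem_F_iff hV hz hγ hC hginv hφg] at h₁ h₂ ⊢
  obtain ⟨hQ₁, p₁, hp₁, hs₁⟩ := h₁
  obtain ⟨hQ₂, p₂, hp₂, hs₂⟩ := h₂
  have happ : ∀ k, (a • q₁ + b • q₂) k = a * q₁ k + b * q₂ k := fun k => by
    simp [smul_eq_mul]
  set pc : Fin K → ℝ := fun j => p₁ j ^ a * p₂ j ^ b with hpc
  have hpcnn : ∀ j, 0 ≤ pc j := fun j =>
    mul_nonneg (Real.rpow_nonneg (hp₁.1 j) a) (Real.rpow_nonneg (hp₂.1 j) b)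
  refine ⟨?_, pc, ⟨hpcnn, ?_⟩, ?_⟩
  · intro k
    rw [happ k]
    have := hglog.1 (hQ₁ k) (hQ₂ k) ha.le hb.le hab
    simpa [smul_eq_mul] using this
  · -- power constraints
    intro n
    have hterm : ∀ j, C n j * pc j ≤ (C n j * p₁ j) ^ a * (C n j * p₂ j) ^ b := by
      intro j
      rcases hC n j with h | h
      · simp [h, Real.zero_rpow ha.ne']
      · simp only [h, one_mul]
        exact le_refl _
    calc C.mulVec pc n = ∑ j, C n j * pc j := mulVec_eq C pc n
      _ ≤ ∑ j, (C n j * p₁ j) ^ a * (C n j * p₂ j) ^ b :=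
          Finset.sum_le_sum fun j _ => hterm j
      _ ≤ (∑ j, C n j * p₁ j) ^ a * (∑ j, C n j * p₂ j) ^ b := by
          have hC0 : ∀ n k, 0 ≤ C n k := by
            intro n k; rcases hC n k with h | h <;> simp [h]
          exact holder_sum ha hb hab _ _ _
            (fun j _ => mul_nonneg (hC0 n j) (hp₁.1 j))
            (fun j _ => mul_nonneg (hC0 n j) (hp₂.1 j))
      _ = (C.mulVec p₁ n) ^ a * (C.mulVec p₂ n) ^ b := by
          rw [← mulVec_eq, ← mulVec_eq]
      _ ≤ phat n ^ a * phat n ^ b := by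
          have hC0 : ∀ n k, 0 ≤ C n k := by
            intro n k; rcases hC n k with h | h <;> simp [h]
          exact mul_le_mul
            (Real.rpow_le_rpow (mulVec_nonneg hC0 hp₁.1 n) (hp₁.2 n) ha.le)
            (Real.rpow_le_rpow (mulVec_nonneg hC0 hp₂.1 n) (hp₂.2 n) hb.le)
            (Real.rpow_nonneg (mulVec_nonneg hC0 hp₂.1 n) b)
            (Real.rpow_nonneg (hphat n).le a)
      _ = phat n := by rw [← Real.rpow_add (hphat n), hab, Real.rpow_one]
  · -- subsolution
    intro k
    have hD1nn : (0:ℝ) ≤ V.mulVec p₁ k + z k :=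
      add_nonneg (mulVec_nonneg hV hp₁.1 k) (hz k).le
    have hD2nn : (0:ℝ) ≤ V.mulVec p₂ k + z k :=
      add_nonneg (mulVec_nonneg hV hp₂.1 k) (hz k).le
    have hg1nn : 0 ≤ g (q₁ k) := (g_pos hginv (hQ₁ k)).le
    have hg2nn : 0 ≤ g (q₂ k) := (g_pos hginv (hQ₂ k)).le
    have hint : V.mulVec pc k + z k ≤
        (V.mulVec p₁ k + z k) ^ a * (V.mulVec p₂ k + z k) ^ b := by
      have hterm : ∀ j, V k j * pc j ≤ (V k j * p₁ j) ^ a * (V k j * p₂ j) ^ b := by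
        intro j
        rcases eq_or_lt_of_le (hV k j) with h0 | hpos
        · rw [← h0]
          simp [Real.zero_rpow ha.ne']
        · have hVab : V k j = V k j ^ a * V k j ^ b := by
            rw [← Real.rpow_add hpos, hab, Real.rpow_one]
          refine le_of_eq ?_
          calc V k j * pc j = (V k j ^ a * V k j ^ b) * (p₁ j ^ a * p₂ j ^ b) := by
                rw [← hVab]
            _ = (V k j ^ a * p₁ j ^ a) * (V k j ^ b * p₂ j ^ b) := by ring
            _ = (V k j * p₁ j) ^ a * (V k j * p₂ j) ^ b := by
                rw [Real.mul_rpow hpos.le (hp₁.1 j), Real.mul_rpow hpos.le (hp₂.1 j)]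
      have h1 : V.mulVec pc k ≤ ∑ j, (V k j * p₁ j) ^ a * (V k j * p₂ j) ^ b := by
        rw [mulVec_eq]
        exact Finset.sum_le_sum fun j _ => hterm j
      have h2 : ∑ j, (V k j * p₁ j) ^ a * (V k j * p₂ j) ^ b ≤
          (V.mulVec p₁ k) ^ a * (V.mulVec p₂ k) ^ b := by
        rw [mulVec_eq V p₁ k, mulVec_eq V p₂ k]
        exact holder_sum ha hb hab _ _ _
          (fun j _ => mul_nonneg (hV k j) (hp₁.1 j))
          (fun j _ => mul_nonneg (hV k j) (hp₂.1 j))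
      have h3 : z k = z k ^ a * z k ^ b := by
        rw [← Real.rpow_add (hz k), hab, Real.rpow_one]
      have h4 := holder_two ha hb hab (mulVec_nonneg hV hp₁.1 k)
        (mulVec_nonneg hV hp₂.1 k) (hz k).le (hz k).le
      linarith
    have hgc := g_comb hglog hginv (hQ₁ k) (hQ₂ k) ha.le hb.le hab
    rw [happ k]
    have hpcD : (0:ℝ) ≤ V.mulVec pc k + z k :=
      add_nonneg (mulVec_nonneg hV hpcnn k) (hz k).le
    calc γ k * g (a * q₁ k + b * q₂ k) * (V.mulVec pc k + z k)
        ≤ (γ k * (g (q₁ k) ^ a * g (q₂ k) ^ b)) *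
            ((V.mulVec p₁ k + z k) ^ a * (V.mulVec p₂ k + z k) ^ b) :=
          mul_le_mul (mul_le_mul_of_nonneg_left hgc (hγ k).le) hint hpcD
            (mul_nonneg (hγ k).le
              (mul_nonneg (Real.rpow_nonneg hg1nn a) (Real.rpow_nonneg hg2nn b)))
      _ = (γ k * g (q₁ k) * (V.mulVec p₁ k + z k)) ^ a *
            (γ k * g (q₂ k) * (V.mulVec p₂ k + z k)) ^ b := by
          have hγab : γ k = γ k ^ a * γ k ^ b := by
            rw [← Real.rpow_add (hγ k), hab, Real.rpow_one]
          rw [Real.mul_rpow (mul_nonneg (hγ k).le hg1nn) hD1nn,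
            Real.mul_rpow (hγ k).le hg1nn,
            Real.mul_rpow (mul_nonneg (hγ k).le hg2nn) hD2nn,
            Real.mul_rpow (hγ k).le hg2nn]
          calc γ k * (g (q₁ k) ^ a * g (q₂ k) ^ b) *
                ((V.mulVec p₁ k + z k) ^ a * (V.mulVec p₂ k + z k) ^ b)
              = (γ k ^ a * γ k ^ b) * (g (q₁ k) ^ a * g (q₂ k) ^ b) *
                ((V.mulVec p₁ k + z k) ^ a * (V.mulVec p₂ k + z k) ^ b) := by
                rw [← hγab]
            _ = γ k ^ a * g (q₁ k) ^ a * (V.mulVec p₁ k + z k) ^ a *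
                (γ k ^ b * g (q₂ k) ^ b * (V.mulVec p₂ k + z k) ^ b) := by ring
      _ ≤ p₁ k ^ a * p₂ k ^ b :=
          mul_le_mul
            (Real.rpow_le_rpow
              (mul_nonneg (mul_nonneg (hγ k).le hg1nn) hD1nn) (hs₁ k) ha.le)
            (Real.rpow_le_rpow
              (mul_nonneg (mul_nonneg (hγ k).le hg2nn) hD2nn) (hs₂ k) hb.le)
            (Real.rpow_nonneg
              (mul_nonneg (mul_nonneg (hγ k).le hg2nn) hD2nn) b)
            (Real.rpow_nonneg (hp₁.1 k) a)

end Convexity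

section Closed

variable {V : Matrix (Fin K) (Fin K) ℝ} {z γ : Fin K → ℝ}
  {C : Matrix (Fin N) (Fin K) ℝ} {phat : Fin N → ℝ} {φ g : ℝ → ℝ}

lemma F_closed (hV : ∀ i j, 0 ≤ V i j) (hz : ∀ k, 0 < z k) (hγ : ∀ k, 0 < γ k)
    (hC : ∀ n k, C n k = 0 ∨ C n k = 1) (hCcol : ∀ k, ∃ n, C n k = 1)
    (hφdiff : ContDiffOn ℝ 1 φ (Set.Ioi 0)) (hφmono : StrictMonoOn φ (Set.Ioi 0))
    (hginv : ∀ x ∈ Set.Ioi (0:ℝ), g (φ x) = x)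
    (hglog : ConvexOn ℝ (φ '' Set.Ioi 0) fun y => Real.log (g y)) :
    IsClosed (QoSRegion V z γ C phat φ) := by
  rw [← isSeqClosed_iff_isClosed]
  intro qs q hqs hlim
  choose ps hps hq using hqs
  obtain ⟨p, hpP, ψ, hψ, hpt⟩ :=
    (Pset_isCompact hC hCcol).tendsto_subseq (fun n => (hps n).1)
  have hD : ∀ k, 0 < V.mulVec p k + z k := fun k =>
    add_pos_of_nonneg_of_pos (mulVec_nonneg hV hpP.1 k) (hz k)
  have hpk : ∀ k, Tendsto (fun n => ps (ψ n) k) atTop (𝓝 (p k)) := fun k =>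
    ((continuous_apply k).tendsto p).comp hpt
  have hDk : ∀ k, Tendsto (fun n => V.mulVec (ps (ψ n)) k + z k) atTop
      (𝓝 (V.mulVec p k + z k)) := fun k =>
    (((cont_mulVec V k).add continuous_const).tendsto p).comp hpt
  have hsn : ∀ k, Tendsto (fun n => SIR V z (ps (ψ n)) k / γ k) atTop
      (𝓝 (p k / (V.mulVec p k + z k) / γ k)) := by
    intro k
    simp only [SIR]
    exact ((hpk k).div (hDk k) (hD k).ne').div_const (γ k)
  have hspos0 : ∀ n k, 0 < SIR V z (ps n) k / γ k := by
    intro n k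
    have hDn : 0 < V.mulVec (ps n) k + z k :=
      add_pos_of_nonneg_of_pos (mulVec_nonneg hV (hps n).1.1 k) (hz k)
    exact div_pos (div_pos ((hps n).2 k) hDn) (hγ k)
  have hQmem : ∀ n k, qs n k ∈ φ '' Set.Ioi 0 := fun n k =>
    ⟨_, hspos0 n k, (hq n k).symm⟩
  have hqk : ∀ k, Tendsto (fun n => qs (ψ n) k) atTop (𝓝 (q k)) := fun k =>
    ((continuous_apply k).tendsto q).comp (hlim.comp hψ.tendsto_atTop)
  have hgval : ∀ n k, g (qs n k) = SIR V z (ps n) k / γ k := fun n k => by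
    rw [hq n k, hginv _ (hspos0 n k)]
  have hskpos : ∀ k, 0 < p k / (V.mulVec p k + z k) / γ k := by
    intro k
    rcases lt_or_ge 0 (p k / (V.mulVec p k + z k) / γ k) with h | hle
    · exact h
    exfalso
    have hs0 : p k / (V.mulVec p k + z k) / γ k = 0 := by
      have hnn : 0 ≤ p k / (V.mulVec p k + z k) / γ k :=
        div_nonneg (div_nonneg (hpP.1 k) (hD k).le) (hγ k).le
      linarith
    have hg0 : Tendsto (fun n => g (qs (ψ n) k)) atTop (𝓝 0) := by
      have heq : (fun n => g (qs (ψ n) k)) =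
          fun n => SIR V z (ps (ψ n)) k / γ k := funext fun n => hgval (ψ n) k
      rw [heq, ← hs0]
      exact hsn k
    have h1Q : φ 1 ∈ φ '' Set.Ioi 0 := ⟨1, by norm_num, rfl⟩
    have h2Q : φ 2 ∈ φ '' Set.Ioi 0 := ⟨2, by norm_num, rfl⟩
    have hφ12 : φ 1 < φ 2 := hφmono (by norm_num) (by norm_num) one_lt_two
    set L : ℝ → ℝ := fun y => Real.log (g y) with hLdef
    set S := (L (φ 2) - L (φ 1)) / (φ 2 - φ 1) with hSdef
    set Bd := φ 1 - (q k - 1) with hBddef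
    set c := L (φ 1) - |S| * Bd with hcdef
    have hgφ1 : g (φ 1) = 1 := hginv 1 (by norm_num)
    have E1 : ∀ᶠ n in atTop, g (qs (ψ n) k) < g (φ 1) :=
      hg0.eventually_lt_const (by rw [hgφ1]; norm_num)
    have E2 : ∀ᶠ n in atTop, q k - 1 < qs (ψ n) k :=
      (hqk k).eventually_const_lt (by linarith)
    have E3 : ∀ᶠ n in atTop, g (qs (ψ n) k) < Real.exp c :=
      hg0.eventually_lt_const (Real.exp_pos c)
    obtain ⟨n, h1, h2, h3⟩ := (E1.and (E2.and E3)).exists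
    set x := qs (ψ n) k with hxdef
    have hxQ : x ∈ φ '' Set.Ioi 0 := hQmem (ψ n) k
    have hxlt : x < φ 1 := by
      rcases lt_or_ge x (φ 1) with h | h
      · exact h
      exact absurd (g_le hφmono hginv h1Q hxQ h) (by push_neg; exact h1)
    have hslope := hglog.slope_mono_adjacent hxQ h2Q hxlt hφ12
    have hd1 : 0 < φ 1 - x := by linarith
    have hineq : L (φ 1) - L x ≤ S * (φ 1 - x) := by
      have := (div_le_iff₀ hd1).mp hslope
      simpa [hSdef, hLdef] using this
    have hBd : φ 1 - x ≤ Bd := by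
      rw [hBddef]
      linarith [h2]
    have hLx : c ≤ L x := by
      have hS1 : S * (φ 1 - x) ≤ |S| * Bd :=
        calc S * (φ 1 - x) ≤ |S| * (φ 1 - x) :=
              mul_le_mul_of_nonneg_right (le_abs_self S) hd1.le
          _ ≤ |S| * Bd := mul_le_mul_of_nonneg_left hBd (abs_nonneg S)
      rw [hcdef]
      linarith
    have hgx : 0 < g x := g_pos hginv hxQ
    have hge : Real.exp c ≤ g x :=
      calc Real.exp c ≤ Real.exp (L x) := Real.exp_le_exp.mpr hLx
        _ = g x := Real.exp_log hgx
    exact absurd h3 (by push_neg; exact hge)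
  have key : ∀ k, 0 < p k ∧ q k = φ (SIR V z p k / γ k) := by
    intro k
    have hsk := hskpos k
    have hppos : 0 < p k := by
      rcases lt_or_ge 0 (p k) with h | hh
      · exact h
      exfalso
      have h1 : p k / (V.mulVec p k + z k) ≤ 0 :=
        div_nonpos_iff.mpr (Or.inr ⟨hh, (hD k).le⟩)
      have h2 : p k / (V.mulVec p k + z k) / γ k ≤ 0 :=
        div_nonpos_iff.mpr (Or.inr ⟨h1, (hγ k).le⟩)
      linarith
    have hφcont : ContinuousAt φ (p k / (V.mulVec p k + z k) / γ k) :=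
      hφdiff.continuousOn.continuousAt (Ioi_mem_nhds hsk)
    have hlim2 : Tendsto (fun n => φ (SIR V z (ps (ψ n)) k / γ k)) atTop
        (𝓝 (φ (p k / (V.mulVec p k + z k) / γ k))) :=
      hφcont.tendsto.comp (hsn k)
    have heq2 : (fun n => qs (ψ n) k) =
        fun n => φ (SIR V z (ps (ψ n)) k / γ k) := funext fun n => hq (ψ n) k
    have hq2 := hqk k
    rw [heq2] at hq2
    refine ⟨hppos, ?_⟩
    have := tendsto_nhds_unique hq2 hlim2
    rw [this]
    rfl
  exact ⟨p, ⟨hpP, fun k => (key k).1⟩, fun k => (key k).2⟩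

end Closed

section Interior

variable {V : Matrix (Fin K) (Fin K) ℝ} {z γ : Fin K → ℝ}
  {C : Matrix (Fin N) (Fin K) ℝ} {phat : Fin N → ℝ} {φ g : ℝ → ℝ}

lemma int_nonempty (hN : 1 ≤ N) (hV : ∀ i j, 0 ≤ V i j) (hz : ∀ k, 0 < z k)
    (hγ : ∀ k, 0 < γ k) (hC : ∀ n k, C n k = 0 ∨ C n k = 1) (hphat : ∀ n, 0 < phat n)
    (hφdiff : ContDiffOn ℝ 1 φ (Set.Ioi 0)) (hφmono : StrictMonoOn φ (Set.Ioi 0))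
    (hginv : ∀ x ∈ Set.Ioi (0:ℝ), g (φ x) = x)
    (hφg : ∀ y ∈ φ '' Set.Ioi 0, φ (g y) = y) :
    (interior (QoSRegion V z γ C phat φ)).Nonempty := by
  classical
  haveI : Nonempty (Fin N) := ⟨⟨0, hN⟩⟩
  set ε := Finset.univ.inf' Finset.univ_nonempty (fun n => phat n / (K + 1)) with hεdef
  have hεpos : 0 < ε := by
    rw [hεdef, Finset.lt_inf'_iff]
    intro n _
    have := hphat n
    positivity
  set p₀ : Fin K → ℝ := fun _ => ε with hp₀def
  have hp₀ : p₀ ∈ Pset C phat := by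
    refine ⟨fun k => hεpos.le, fun n => ?_⟩
    have hle : C.mulVec p₀ n ≤ K * ε := by
      rw [mulVec_eq]
      calc ∑ j, C n j * p₀ j ≤ ∑ _j : Fin K, ε := by
            refine Finset.sum_le_sum fun j _ => ?_
            rcases hC n j with h | h
            · rw [h, zero_mul]; exact hεpos.le
            · rw [h, one_mul]
        _ = K * ε := by
            rw [Finset.sum_const, Finset.card_univ, Fintype.card_fin, nsmul_eq_mul]
    have hεle : ε ≤ phat n / (K + 1) := Finset.inf'_le _ (Finset.mem_univ n)
    have hKn : (0:ℝ) ≤ (K:ℝ) := Nat.cast_nonneg K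
    calc C.mulVec p₀ n ≤ K * ε := hle
      _ ≤ (K + 1) * (phat n / (K + 1)) := by nlinarith [hεpos.le, hεle]
      _ = phat n := by field_simp
  have hD : ∀ k, 0 < V.mulVec p₀ k + z k := fun k =>
    add_pos_of_nonneg_of_pos (mulVec_nonneg hV (fun _ => hεpos.le) k) (hz k)
  set s : Fin K → ℝ := fun k => SIR V z p₀ k / γ k with hsdef
  have hspos : ∀ k, 0 < s k := by
    intro k
    exact div_pos (div_pos hεpos (hD k)) (hγ k)
  set O := {x : Fin K → ℝ | ∀ k, x k ∈ Set.Ioo (φ (s k / 2)) (φ (s k))} with hOdef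
  have hOopen : IsOpen O := by
    rw [hOdef, Set.setOf_forall]
    exact isOpen_iInter_of_finite fun k => (isOpen_Ioo).preimage (continuous_apply k)
  have hQsub : ∀ k, Set.Ioo (φ (s k / 2)) (φ (s k)) ⊆ φ '' Set.Ioi 0 := by
    intro k
    have h1 : s k / 2 ≤ s k := by linarith [hspos k]
    have h2 : ContinuousOn φ (Set.Icc (s k / 2) (s k)) := by
      refine hφdiff.continuousOn.mono fun y hy => ?_
      have := hspos k
      have := hy.1
      simp only [Set.mem_Ioi]
      linarith
    refine (intermediate_value_Ioo h1 h2).trans ?_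
    refine Set.image_mono fun y hy => ?_
    have := hspos k
    have := hy.1
    simp only [Set.mem_Ioi]
    linarith
  have hOsub : O ⊆ QoSRegion V z γ C phat φ := by
    intro x hx
    rw [mem_F_iff hV hz hγ hC hginv hφg]
    have hxQ : ∀ k, x k ∈ φ '' Set.Ioi 0 := fun k => hQsub k (hx k)
    refine ⟨hxQ, p₀, hp₀, fun k => ?_⟩
    have hskQ : φ (s k) ∈ φ '' Set.Ioi 0 := ⟨s k, hspos k, rfl⟩
    have hgk : g (x k) ≤ s k := by
      have h := g_lt hφmono hginv (hxQ k) hskQ (hx k).2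
      rw [hginv _ (hspos k)] at h
      exact h.le
    have heq : γ k * s k * (V.mulVec p₀ k + z k) = p₀ k := by
      have hD' := (hD k).ne'
      have hγ' := (hγ k).ne'
      rw [hsdef]
      simp only [SIR]
      calc γ k * (p₀ k / (V.mulVec p₀ k + z k) / γ k) * (V.mulVec p₀ k + z k)
          = p₀ k * ((V.mulVec p₀ k + z k) / (V.mulVec p₀ k + z k)) * (γ k / γ k) := by
            ring
        _ = p₀ k := by rw [div_self hD', div_self hγ']; ring
    have hgnn : 0 < g (x k) := g_pos hginv (hxQ k)
    calc γ k * g (x k) * (V.mulVec p₀ k + z k)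
        ≤ γ k * s k * (V.mulVec p₀ k + z k) := by
          have h1 : γ k * g (x k) ≤ γ k * s k :=
            mul_le_mul_of_nonneg_left hgk (hγ k).le
          exact mul_le_mul_of_nonneg_right h1 (hD k).le
      _ = p₀ k := heq
  have hne : O.Nonempty := by
    refine ⟨fun k => φ (3 * s k / 4), fun k => ⟨?_, ?_⟩⟩
    · exact hφmono (by have := hspos k; simp only [Set.mem_Ioi]; linarith)
        (by have := hspos k; simp only [Set.mem_Ioi]; linarith)
        (by linarith [hspos k])
    · exact hφmono (by have := hspos k; simp only [Set.mem_Ioi]; linarith)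
        (hspos k) (by linarith [hspos k])
  obtain ⟨x₀, hx₀⟩ := hne
  exact ⟨x₀, interior_maximal hOsub hOopen hx₀⟩

end Interior

section Wpos

lemma mulVec_avg {a : ℕ} (A : Matrix (Fin a) (Fin K) ℝ) (it : ℕ → Fin K → ℝ)
    (M : ℕ) (i : Fin a) :
    A.mulVec (fun m => (∑ n ∈ Finset.range M, it n m) / M) i
      = (∑ n ∈ Finset.range M, A.mulVec (it n) i) / M := by
  simp only [mulVec_eq]
  calc ∑ j, A i j * ((∑ n ∈ Finset.range M, it n j) / M)
      = ∑ j, (∑ n ∈ Finset.range M, A i j * it n j) / M := by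
        refine Finset.sum_congr rfl fun j _ => ?_
        rw [← mul_div_assoc, Finset.mul_sum]
    _ = (∑ j, ∑ n ∈ Finset.range M, A i j * it n j) / M := by rw [Finset.sum_div]
    _ = (∑ n ∈ Finset.range M, ∑ j, A i j * it n j) / M := by rw [Finset.sum_comm]

variable {V : Matrix (Fin K) (Fin K) ℝ} {z γ : Fin K → ℝ}
  {C : Matrix (Fin N) (Fin K) ℝ} {phat : Fin N → ℝ} {φ g : ℝ → ℝ}

lemma w_pos (hV : ∀ i j, 0 ≤ V i j) (hz : ∀ k, 0 < z k) (hγ : ∀ k, 0 < γ k)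
    (hC : ∀ n k, C n k = 0 ∨ C n k = 1) (hirr : MatIrred V)
    (hφmono : StrictMonoOn φ (Set.Ioi 0))
    (hginv : ∀ x ∈ Set.Ioi (0:ℝ), g (φ x) = x)
    (hφg : ∀ y ∈ φ '' Set.Ioi 0, φ (g y) = y)
    {q w : Fin K → ℝ} (hqF : q ∈ QoSRegion V z γ C phat φ)
    (hsup : ∀ x ∈ QoSRegion V z γ C phat φ, ∑ k, w k * x k ≤ ∑ k, w k * q k)
    (hwne : w ≠ 0) : ∀ k, 0 < w k := by
  classical
  have hC0 : ∀ n k, 0 ≤ C n k := by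
    intro n k; rcases hC n k with h | h <;> simp [h]
  obtain ⟨p, hpP, hppos, hQ, hfix⟩ := F_fix hV hz hγ hginv hqF
  have hgpos : ∀ k, 0 < g (q k) := fun k => g_pos hginv (hQ k)
  have hD : ∀ k, 0 < V.mulVec p k + z k := fun k =>
    add_pos_of_nonneg_of_pos (mulVec_nonneg hV hpP.1 k) (hz k)
  have hdiff : ∀ x : Fin K → ℝ,
      ∑ k, w k * x k - ∑ k, w k * q k = ∑ k, w k * (x k - q k) := by
    intro x
    rw [← Finset.sum_sub_distrib]
    exact Finset.sum_congr rfl fun k _ => by ring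
  -- Step 1 : all weights are nonnegative
  have hw0 : ∀ k, 0 ≤ w k := by
    intro k
    by_contra hneg
    push_neg at hneg
    have hhalf : g (q k) / 2 ∈ Set.Ioi (0:ℝ) := by
      simp only [Set.mem_Ioi]; linarith [hgpos k]
    set qm := Function.update q k (φ (g (q k) / 2)) with hqm
    have hqmF : qm ∈ QoSRegion V z γ C phat φ := by
      rw [mem_F_iff hV hz hγ hC hginv hφg]
      refine ⟨?_, p, hpP, ?_⟩
      · intro m
        by_cases hm : m = k
        · subst hm; rw [hqm, Function.update_self]; exact ⟨_, hhalf, rfl⟩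
        · rw [hqm, Function.update_of_ne hm]; exact hQ m
      · intro m
        by_cases hm : m = k
        · subst hm
          rw [hqm, Function.update_self, hginv _ hhalf]
          have heq : γ m * (g (q m) / 2) * (V.mulVec p m + z m) = p m / 2 := by
            rw [← hfix m]; ring
          rw [heq]
          linarith [hppos m]
        · rw [hqm, Function.update_of_ne hm]
          exact (hfix m).le
    have hlt : qm k < q k := by
      rw [hqm, Function.update_self]
      have h1 : φ (g (q k) / 2) < φ (g (q k)) :=
        hφmono hhalf (Set.mem_Ioi.mpr (hgpos k)) (by linarith [hgpos k])
      rw [hφg _ (hQ k)] at h1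
      exact h1
    have hs := hsup qm hqmF
    have hsum : ∑ m, w m * (qm m - q m) = w k * (qm k - q k) := by
      refine Finset.sum_eq_single k (fun m _ hm => ?_)
        (fun h => absurd (Finset.mem_univ k) h)
      rw [hqm, Function.update_of_ne hm]; ring
    have hpos : 0 < w k * (qm k - q k) :=
      mul_pos_of_neg_of_neg hneg (by linarith)
    have h2 := hdiff qm
    linarith
  -- Step 2 : strict positivity
  intro k₀
  rcases (hw0 k₀).lt_or_eq with hlt | heq
  · exact hlt
  exfalso
  set Z : Set (Fin K) := {m | w m = 0} with hZdef
  have hk₀Z : k₀ ∈ Z := heq.symm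
  obtain ⟨j, hj⟩ : ∃ j, w j ≠ 0 := by
    by_contra hall; push_neg at hall
    exact hwne (funext fun m => hall m)
  have hwj : 0 < w j := (hw0 j).lt_of_ne (Ne.symm hj)
  have hjZ : j ∉ Z := fun hjm => hj hjm
  set q' : Fin K → ℝ := fun m => if m ∈ Z then φ (g (q m) / 2) else q m with hq'def
  have hhalf : ∀ m, g (q m) / 2 ∈ Set.Ioi (0:ℝ) := fun m => by
    simp only [Set.mem_Ioi]; linarith [hgpos m]
  have hq'Q : ∀ m, q' m ∈ φ '' Set.Ioi 0 := by
    intro m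
    rw [hq'def]
    by_cases hm : m ∈ Z
    · simp only [if_pos hm]; exact ⟨_, hhalf m, rfl⟩
    · simp only [if_neg hm]; exact hQ m
  have hg'Z : ∀ m ∈ Z, g (q' m) = g (q m) / 2 := by
    intro m hm
    rw [hq'def]; simp only [if_pos hm]
    exact hginv _ (hhalf m)
  have hq'nZ : ∀ m, m ∉ Z → q' m = q m := by
    intro m hm; rw [hq'def]; simp only [if_neg hm]
  have hg'pos : ∀ m, 0 < g (q' m) := fun m => g_pos hginv (hq'Q m)
  have hβ'le : ∀ m, γ m * g (q' m) ≤ γ m * g (q m) := by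
    intro m
    by_cases hm : m ∈ Z
    · rw [hg'Z m hm]; nlinarith [hγ m, hgpos m]
    · rw [hq'nZ m hm]
  have hβ'lt : ∀ m ∈ Z, γ m * g (q' m) < γ m * g (q m) := by
    intro m hm
    rw [hg'Z m hm]; nlinarith [hγ m, hgpos m]
  have hsub' : ∀ m, Umap V z (fun m => γ m * g (q' m)) p m ≤ p m := by
    intro m
    show γ m * g (q' m) * (V.mulVec p m + z m) ≤ p m
    calc γ m * g (q' m) * (V.mulVec p m + z m)
        ≤ γ m * g (q m) * (V.mulVec p m + z m) :=
          mul_le_mul_of_nonneg_right (hβ'le m) (hD m).le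
      _ = p m := hfix m
  obtain ⟨p₁, hp₁P, hp₁le, hp₁fix, hp₁tend, hitmem⟩ :=
    exists_fixpt hV hz (fun m => mul_pos (hγ m) (hg'pos m)) hC0 hpP hsub'
  -- strict decrease everywhere via irreducibility
  have hstrict : ∀ m, p₁ m < p m := by
    set S : Set (Fin K) := {m | p₁ m < p m} with hSdef
    have hZS : ∀ m ∈ Z, m ∈ S := by
      intro m hm
      have h1 : γ m * g (q' m) * (V.mulVec p₁ m + z m) = p₁ m := hp₁fix m
      have h2 : V.mulVec p₁ m + z m ≤ V.mulVec p m + z m := by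
        have := mulVec_mono hV hp₁le m; linarith
      have h3 : γ m * g (q' m) * (V.mulVec p₁ m + z m)
          ≤ γ m * g (q' m) * (V.mulVec p m + z m) :=
        mul_le_mul_of_nonneg_left h2 (mul_pos (hγ m) (hg'pos m)).le
      have h4 : γ m * g (q' m) * (V.mulVec p m + z m)
          < γ m * g (q m) * (V.mulVec p m + z m) :=
        mul_lt_mul_of_pos_right (hβ'lt m hm) (hD m)
      have h5 := hfix m
      show p₁ m < p m
      linarith
    by_contra hns
    push_neg at hns
    obtain ⟨m₀, hm₀⟩ := hns
    have hm₀Sc : m₀ ∈ Sᶜ := fun hc => absurd hc (not_lt.mpr hm₀)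
    have hSc_ne_univ : Sᶜ ≠ Set.univ := by
      intro huniv
      have hmem : k₀ ∈ Sᶜ := huniv ▸ Set.mem_univ k₀
      exact hmem (hZS k₀ hk₀Z)
    obtain ⟨i, hiSc, j', hj'Sc, hVij⟩ := hirr Sᶜ ⟨m₀, hm₀Sc⟩ hSc_ne_univ
    have hj'S : j' ∈ S := not_not.mp hj'Sc
    have hlt1 : V.mulVec p₁ i < V.mulVec p i := by
      rw [mulVec_eq, mulVec_eq]
      refine Finset.sum_lt_sum
        (fun m _ => mul_le_mul_of_nonneg_left (hp₁le m) (hV i m))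
        ⟨j', Finset.mem_univ j', mul_lt_mul_of_pos_left hj'S hVij⟩
    have h1 : γ i * g (q' i) * (V.mulVec p₁ i + z i) = p₁ i := hp₁fix i
    have h3 : γ i * g (q' i) * (V.mulVec p₁ i + z i)
        < γ i * g (q' i) * (V.mulVec p i + z i) :=
      mul_lt_mul_of_pos_left (by linarith) (mul_pos (hγ i) (hg'pos i))
    have h4 : γ i * g (q' i) * (V.mulVec p i + z i)
        ≤ γ i * g (q i) * (V.mulVec p i + z i) :=
      mul_le_mul_of_nonneg_right (hβ'le i) (hD i).le
    have h5 := hfix i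
    exact hiSc (show p₁ i < p i by linarith)
  -- choose an averaging horizon
  have hev : ∀ᶠ n in atTop, ∀ m,
      (Umap V z (fun m => γ m * g (q' m)))^[n] p m < p m := by
    rw [eventually_all]
    intro m
    exact (tendsto_pi_nhds.mp hp₁tend m).eventually_lt_const (hstrict m)
  obtain ⟨M, hM1, hMlt⟩ := ((eventually_ge_atTop 1).and hev).exists
  have hMpos : (0:ℝ) < (M:ℝ) := by exact_mod_cast Nat.lt_of_lt_of_le Nat.zero_lt_one hM1
  set it : ℕ → Fin K → ℝ := fun n => (Umap V z (fun m => γ m * g (q' m)))^[n] p with hitdef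
  have hit_succ : ∀ n, it (n + 1) = Umap V z (fun m => γ m * g (q' m)) (it n) := by
    intro n; simp only [hitdef, Function.iterate_succ_apply']
  set ps : Fin K → ℝ := fun m => (∑ n ∈ Finset.range M, it n m) / M with hpsdef
  have hitnn : ∀ n m, 0 ≤ it n m := fun n m => (hitmem n).1 m
  have hpsnn : ∀ m, 0 ≤ ps m := fun m =>
    div_nonneg (Finset.sum_nonneg fun n _ => hitnn n m) hMpos.le
  have hpsP : ps ∈ Pset C phat := by
    refine ⟨hpsnn, fun n => ?_⟩
    rw [hpsdef, mulVec_avg, div_le_iff₀ hMpos]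
    calc ∑ i ∈ Finset.range M, C.mulVec (it i) n
        ≤ ∑ _i ∈ Finset.range M, phat n :=
          Finset.sum_le_sum fun i _ => (hitmem i).2 n
      _ = M * phat n := by
          rw [Finset.sum_const, Finset.card_range, nsmul_eq_mul]
      _ = phat n * M := mul_comm _ _
  have hUps : ∀ m, Umap V z (fun m => γ m * g (q' m)) ps m
      = (∑ n ∈ Finset.range M, it (n + 1) m) / M := by
    intro m
    show γ m * g (q' m) * (V.mulVec ps m + z m) = _
    rw [hpsdef, mulVec_avg V it M m]
    have hsum2 : ∑ n ∈ Finset.range M, it (n + 1) m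
        = ∑ n ∈ Finset.range M, γ m * g (q' m) * (V.mulVec (it n) m + z m) := by
      refine Finset.sum_congr rfl fun n _ => ?_
      rw [hit_succ n]
      rfl
    have hsum1 : ∑ n ∈ Finset.range M, γ m * g (q' m) * (V.mulVec (it n) m + z m)
        = γ m * g (q' m) * ((∑ n ∈ Finset.range M, V.mulVec (it n) m) + M * z m) := by
      rw [← Finset.mul_sum, Finset.sum_add_distrib, Finset.sum_const,
        Finset.card_range, nsmul_eq_mul]
    have hMne : (M:ℝ) ≠ 0 := hMpos.ne'
    have h0 : (∑ n ∈ Finset.range M, V.mulVec (it n) m + M * z m) / M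
        = (∑ n ∈ Finset.range M, V.mulVec (it n) m) / M + z m := by
      rw [add_div, mul_div_cancel_left₀ _ hMne]
    rw [hsum2, hsum1, ← h0, mul_div_assoc]
  have hUslt : ∀ m, Umap V z (fun m => γ m * g (q' m)) ps m < ps m := by
    intro m
    rw [hUps m, hpsdef]
    have h1 := Finset.sum_range_succ' (fun n => it n m) M
    have h2 := Finset.sum_range_succ (fun n => it n m) M
    have h3 : it M m < it 0 m := by
      have := hMlt m
      simpa [hitdef] using this
    have htel : ∑ n ∈ Finset.range M, it (n + 1) m
        < ∑ n ∈ Finset.range M, it n m := by linarith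
    rw [div_lt_div_iff₀ hMpos hMpos]
    nlinarith [htel, hMpos]
  have hDps : ∀ m, 0 < V.mulVec ps m + z m := fun m =>
    add_pos_of_nonneg_of_pos (mulVec_nonneg hV hpsnn m) (hz m)
  have hpspos : ∀ m, 0 < ps m := fun m =>
    lt_trans (mul_pos (mul_pos (hγ m) (hg'pos m)) (hDps m)) (hUslt m)
  -- bump coordinate j
  set v := ps j / (γ j * (V.mulVec ps j + z j)) with hvdef
  have hvpos : 0 < v := div_pos (hpspos j) (mul_pos (hγ j) (hDps j))
  have hvgt : g (q j) < v := by
    have h1 := hUslt j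
    have h1' : γ j * g (q' j) * (V.mulVec ps j + z j) < ps j := h1
    rw [hq'nZ j hjZ] at h1'
    rw [hvdef, lt_div_iff₀ (mul_pos (hγ j) (hDps j))]
    nlinarith [h1']
  have hφv : q j < φ v := by
    have h1 := hφmono (Set.mem_Ioi.mpr (hgpos j)) (Set.mem_Ioi.mpr hvpos) hvgt
    rw [hφg _ (hQ j)] at h1
    exact h1
  set qh := Function.update q' j (φ v) with hqhdef
  have hqhF : qh ∈ QoSRegion V z γ C phat φ := by
    rw [mem_F_iff hV hz hγ hC hginv hφg]
    refine ⟨?_, ps, hpsP, ?_⟩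
    · intro m
      by_cases hm : m = j
      · subst hm; rw [hqhdef, Function.update_self]; exact ⟨v, hvpos, rfl⟩
      · rw [hqhdef, Function.update_of_ne hm]; exact hq'Q m
    · intro m
      by_cases hm : m = j
      · subst hm
        rw [hqhdef, Function.update_self, hginv v hvpos]
        refine le_of_eq ?_
        rw [hvdef]
        have hne := (mul_pos (hγ m) (hDps m)).ne'
        calc γ m * (ps m / (γ m * (V.mulVec ps m + z m))) * (V.mulVec ps m + z m)
            = ps m * ((γ m * (V.mulVec ps m + z m)) / (γ m * (V.mulVec ps m + z m))) := by
              ring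
          _ = ps m := by rw [div_self hne]; ring
      · rw [hqhdef, Function.update_of_ne hm]
        exact (hUslt m).le
  have hs := hsup qh hqhF
  have hterm_nonneg : ∀ m, 0 ≤ w m * (qh m - q m) := by
    intro m
    by_cases hmj : m = j
    · subst hmj
      have h1 : qh m = φ v := by rw [hqhdef, Function.update_self]
      rw [h1]
      exact mul_nonneg (hw0 m) (by linarith)
    · by_cases hmZ : m ∈ Z
      · have h1 : w m = 0 := hmZ
        rw [h1, zero_mul]
      · have h1 : qh m = q m := by
          rw [hqhdef, Function.update_of_ne hmj]; exact hq'nZ m hmZ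
        rw [h1]; simp
  have hterm_pos : 0 < w j * (qh j - q j) := by
    have h1 : qh j = φ v := by rw [hqhdef, Function.update_self]
    rw [h1]
    exact mul_pos hwj (by linarith)
  have hposs : 0 < ∑ m, w m * (qh m - q m) :=
    Finset.sum_pos' (fun m _ => hterm_nonneg m) ⟨j, Finset.mem_univ j, hterm_pos⟩
  have h2 := hdiff qh
  linarith

end Wpos

lemma clm_eq_sum (f : (Fin K → ℝ) →L[ℝ] ℝ) (x : Fin K → ℝ) :
    f x = ∑ k, x k * f (Pi.single k 1) := by
  classical
  have hx : x = ∑ k, x k • (Pi.single k 1 : Fin K → ℝ) := by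
    funext j
    simp only [Finset.sum_apply, Pi.smul_apply, Pi.single_apply, smul_eq_mul,
      mul_ite, mul_one, mul_zero]
    rw [Finset.sum_ite_eq Finset.univ j (fun k => x k)]
    simp
  conv_lhs => rw [hx]
  rw [map_sum]
  exact Finset.sum_congr rfl fun k _ => by rw [_root_.map_smul, smul_eq_mul]

end QoSAux

open Filter Topology in
theorem stmt0    {K N : ℕ} (hK : 2 ≤ K) (hN : 1 ≤ N)
    (V : Matrix (Fin K) (Fin K) ℝ) (z γ : Fin K → ℝ)
    (C : Matrix (Fin N) (Fin K) ℝ) (phat : Fin N → ℝ)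
    (hV : ∀ i j, 0 ≤ V i j) (hVdiag : ∀ i, V i i = 0)
    (hz : ∀ k, 0 < z k) (hγ : ∀ k, 0 < γ k)
    (hC : ∀ n k, C n k = 0 ∨ C n k = 1) (hCcol : ∀ k, ∃ n, C n k = 1)
    (hphat : ∀ n, 0 < phat n)
    (hirr : MatIrred V)
    (φ g : ℝ → ℝ)
    (hφdiff : ContDiffOn ℝ 1 φ (Set.Ioi 0)) (hφmono : StrictMonoOn φ (Set.Ioi 0))
    (hginv : ∀ x ∈ Set.Ioi (0:ℝ), g (φ x) = x) (hφg : ∀ q ∈ φ '' Set.Ioi 0, φ (g q) = q)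
    (hglog : ConvexOn ℝ (φ '' Set.Ioi 0) fun q => Real.log (g q))
    (q : Fin K → ℝ) :
    q ∈ frontier (QoSRegion V z γ C phat φ) ↔
      ∃ w : Fin K → ℝ, (∀ k, 0 < w k) ∧ q ∈ QoSRegion V z γ C phat φ ∧
        ∀ x ∈ QoSRegion V z γ C phat φ, ∑ k, w k * x k ≤ ∑ k, w k * q k := by
  classical
  have hC0 : ∀ n k, 0 ≤ C n k := by
    intro n k; rcases hC n k with h | h <;> simp [h]
  have hclosed : IsClosed (QoSRegion V z γ C phat φ) :=
    QoSAux.F_closed hV hz hγ hC hCcol hφdiff hφmono hginv hglog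
  have hconv : Convex ℝ (QoSRegion V z γ C phat φ) :=
    QoSAux.F_convex hV hz hγ hC hphat hginv hφg hglog
  have hint : (interior (QoSRegion V z γ C phat φ)).Nonempty :=
    QoSAux.int_nonempty hN hV hz hγ hC hphat hφdiff hφmono hginv hφg
  haveI : Nonempty (Fin K) := ⟨⟨0, by omega⟩⟩
  constructor
  · -- frontier point ⇒ supported maximizer with positive weights
    intro hfr
    have hqF : q ∈ QoSRegion V z γ C phat φ :=
      hclosed.closure_subset (frontier_subset_closure hfr)
    have hqNI : q ∉ interior (QoSRegion V z γ C phat φ) := hfr.2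
    obtain ⟨f, hf⟩ :=
      geometric_hahn_banach_open_point hconv.interior isOpen_interior hqNI
    set w : Fin K → ℝ := fun k => f (Pi.single k 1) with hwdef
    have hfs : ∀ x, f x = ∑ k, w k * x k := by
      intro x
      rw [QoSAux.clm_eq_sum f x]
      exact Finset.sum_congr rfl fun k _ => mul_comm _ _
    obtain ⟨aa, haa⟩ := hint
    have hfne : f aa < f q := hf aa haa
    have hsupf : ∀ x ∈ QoSRegion V z γ C phat φ, f x ≤ f q := by
      intro x hx
      have hyyI : ∀ n : ℕ, 1 ≤ n →
          ((1/(n+1) : ℝ) • aa + (1 - 1/(n+1) : ℝ) • x)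
            ∈ interior (QoSRegion V z γ C phat φ) := by
        intro n hn
        refine hconv.openSegment_interior_closure_subset_interior haa
          (subset_closure hx) ?_
        refine ⟨1/(n+1), 1 - 1/(n+1), by positivity, ?_, by ring, rfl⟩
        have h1 : (1:ℝ) ≤ n := by exact_mod_cast hn
        have h2 : (1:ℝ)/(n+1) ≤ 1/2 := by
          rw [div_le_div_iff₀ (by positivity) (by norm_num)]
          linarith
        linarith
      have hyylim : Tendsto
          (fun n : ℕ => (1/(n+1) : ℝ) • aa + (1 - 1/(n+1) : ℝ) • x)
          atTop (𝓝 x) := by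
        have hcont : Continuous fun c : ℝ => c • aa + (1 - c) • x :=
          (continuous_id.smul continuous_const).add
            ((continuous_const.sub continuous_id).smul continuous_const)
        have h := (hcont.tendsto 0).comp tendsto_one_div_add_atTop_nhds_zero_nat
        simpa [Function.comp_def] using h
      have hfle : ∀ᶠ n : ℕ in atTop,
          f ((1/(n+1) : ℝ) • aa + (1 - 1/(n+1) : ℝ) • x) ≤ f q := by
        filter_upwards [eventually_ge_atTop 1] with n hn
        exact (hf _ (hyyI n hn)).le
      exact le_of_tendsto ((f.continuous.tendsto x).comp hyylim) hfle
    have hsup : ∀ x ∈ QoSRegion V z γ C phat φ,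
        ∑ k, w k * x k ≤ ∑ k, w k * q k := by
      intro x hx
      rw [← hfs x, ← hfs q]
      exact hsupf x hx
    have hwne : w ≠ 0 := by
      intro h0
      have h1 : f aa = 0 := by rw [hfs aa, h0]; simp
      have h2 : f q = 0 := by rw [hfs q, h0]; simp
      rw [h1, h2] at hfne
      exact lt_irrefl 0 hfne
    exact ⟨w, QoSAux.w_pos hV hz hγ hC hirr hφmono hginv hφg hqF hsup hwne,
      hqF, hsup⟩
  · -- supported maximizer ⇒ frontier point
    rintro ⟨w, hwpos, hqF, hsup⟩
    refine ⟨subset_closure hqF, ?_⟩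
    intro hintq
    obtain ⟨ε, hε, hball⟩ := Metric.isOpen_iff.mp isOpen_interior q hintq
    have hwn : (0:ℝ) ≤ ‖w‖ := norm_nonneg w
    set δ := ε / (2 * (‖w‖ + 1)) with hδdef
    have hδpos : 0 < δ := by positivity
    set x := q + δ • w with hxdef
    have hxball : x ∈ Metric.ball q ε := by
      rw [Metric.mem_ball, dist_eq_norm]
      have hsub : x - q = δ • w := by rw [hxdef]; abel
      rw [hsub, norm_smul, Real.norm_eq_abs, abs_of_pos hδpos]
      have h1 : δ * ‖w‖ ≤ δ * (‖w‖ + 1) := by nlinarith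
      have h2 : δ * (‖w‖ + 1) = ε / 2 := by
        rw [hδdef]; field_simp
      linarith
    have hxF : x ∈ QoSRegion V z γ C phat φ := interior_subset (hball hxball)
    have hle := hsup x hxF
    have hxk : ∀ k, x k = q k + δ * w k := by
      intro k; rw [hxdef]; simp [smul_eq_mul]
    have hsum : ∑ k, w k * x k = ∑ k, w k * q k + δ * ∑ k, w k * w k := by
      calc ∑ k, w k * x k = ∑ k, (w k * q k + δ * (w k * w k)) := by
            refine Finset.sum_congr rfl fun k _ => ?_
            rw [hxk k]; ring
        _ = ∑ k, w k * q k + δ * ∑ k, w k * w k := by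
            rw [Finset.sum_add_distrib, ← Finset.mul_sum]
    have hsq : 0 < ∑ k, w k * w k :=
      Finset.sum_pos (fun k _ => mul_pos (hwpos k) (hwpos k)) Finset.univ_nonempty
    nlinarith [hle, hsum, hδpos, hsq]
end

section
/- If the gain matrix V is irreducible, then the max-min SIR-balanced power vector is unique: there is exactly one p̄ ∈ P such that min_{1≤k≤K} SIR_k(p̄)/γ_k ≥ min_{1≤k≤K} SIR_k(p)/γ_k for all p ∈ P. -/
open Matrix

theorem stmt1    {K N : ℕ} (hK : 2 ≤ K) (hN : 1 ≤ N)
    (V : Matrix (Fin K) (Fin K) ℝ) (z γ : Fin K → ℝ)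
    (C : Matrix (Fin N) (Fin K) ℝ) (phat : Fin N → ℝ)
    (hV : ∀ i j, 0 ≤ V i j) (hVdiag : ∀ i, V i i = 0)
    (hz : ∀ k, 0 < z k) (hγ : ∀ k, 0 < γ k)
    (hC : ∀ n k, C n k = 0 ∨ C n k = 1) (hCcol : ∀ k, ∃ n, C n k = 1)
    (hphat : ∀ n, 0 < phat n)
    (hirr : MatIrred V)
 :
    ∃! pbar : Fin K → ℝ, MaxMinBalanced V z γ C phat pbar := by
  
  classical
  haveI : Nonempty (Fin K) := ⟨⟨0, by omega⟩⟩
  haveI : Nonempty (Fin N) := ⟨⟨0, by omega⟩⟩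
  set f : (Fin K → ℝ) → ℝ := fun p => ⨅ k, SIR V z p k / γ k with hf
  set P : Set (Fin K → ℝ) := Pset C phat with hPdef
  have hC0 : ∀ n k, 0 ≤ C n k := by
    intro n k; rcases hC n k with h | h <;> rw [h] <;> norm_num
  have hmvC : ∀ (p : Fin K → ℝ) n, C.mulVec p n = ∑ j, C n j * p j := by
    intro p n; rfl
  have hmvV : ∀ (p : Fin K → ℝ) k, V.mulVec p k = ∑ j, V k j * p j := by
    intro p k; rfl
  have hden : ∀ p : Fin K → ℝ, (∀ k, 0 ≤ p k) → ∀ k, 0 < V.mulVec p k + z k := by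
    intro p hp k
    have : 0 ≤ V.mulVec p k := by
      rw [hmvV]
      apply Finset.sum_nonneg
      intro j _
      exact mul_nonneg (hV k j) (hp j)
    linarith [hz k]
  have hbdd : ∀ p : Fin K → ℝ, BddBelow (Set.range fun k => SIR V z p k / γ k) :=
    fun p => (Set.finite_range _).bddBelow
  have hfle : ∀ p (k : Fin K), f p ≤ SIR V z p k / γ k := fun p k => ciInf_le (hbdd p) k
  -- P is compact and nonempty
  have hPne : P.Nonempty := by
    refine ⟨0, fun k => le_refl 0, fun n => ?_⟩
    rw [Matrix.mulVec_zero]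
    exact (hphat n).le
  have hcontC : ∀ n : Fin N, Continuous (fun p : Fin K → ℝ => C.mulVec p n) := by
    intro n
    simp only [hmvC]
    exact continuous_finset_sum _ fun j _ => continuous_const.mul (continuous_apply j)
  have hPclosed : IsClosed P := by
    have h1 : IsClosed {p : Fin K → ℝ | ∀ k, 0 ≤ p k} := by
      have : {p : Fin K → ℝ | ∀ k, 0 ≤ p k} = ⋂ k, {p | 0 ≤ p k} := by
        ext p; simp
      rw [this]
      exact isClosed_iInter fun k => isClosed_le continuous_const (continuous_apply k)
    have h2 : IsClosed {p : Fin K → ℝ | ∀ n, C.mulVec p n ≤ phat n} := by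
      have : {p : Fin K → ℝ | ∀ n, C.mulVec p n ≤ phat n}
          = ⋂ n, {p | C.mulVec p n ≤ phat n} := by ext p; simp
      rw [this]
      exact isClosed_iInter fun n => isClosed_le (hcontC n) continuous_const
    exact h1.inter h2
  obtain ⟨B, hB⟩ : ∃ B : ℝ, ∀ n, phat n ≤ B :=
    ⟨Finset.univ.sup' Finset.univ_nonempty phat, fun n => Finset.le_sup' _ (Finset.mem_univ n)⟩
  have hPsub : P ⊆ Set.pi Set.univ fun _ : Fin K => Set.Icc (0:ℝ) B := by
    intro p hp k _
    obtain ⟨n, hn⟩ := hCcol k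
    refine ⟨hp.1 k, ?_⟩
    have h1 : p k ≤ C.mulVec p n := by
      rw [hmvC]
      calc p k = C n k * p k := by rw [hn, one_mul]
        _ ≤ ∑ j, C n j * p j := by
            apply Finset.single_le_sum (f := fun j => C n j * p j)
              (fun j _ => mul_nonneg (hC0 n j) (hp.1 j)) (Finset.mem_univ k)
    exact h1.trans ((hp.2 n).trans (hB n))
  have hPcomp : IsCompact P :=
    (isCompact_univ_pi fun _ => isCompact_Icc).of_isClosed_subset hPclosed hPsub
  -- continuity of f on P
  have hSIRcont : ∀ k : Fin K, ContinuousOn (fun p => SIR V z p k / γ k) P := by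
    intro k
    have hcV : Continuous (fun p : Fin K → ℝ => V.mulVec p k + z k) := by
      refine Continuous.add ?_ continuous_const
      simp only [hmvV]
      exact continuous_finset_sum _ fun j _ => continuous_const.mul (continuous_apply j)
    simp only [SIR]
    apply ContinuousOn.div_const
    exact ContinuousOn.div (continuous_apply k).continuousOn hcV.continuousOn
      (fun p hp => (hden p hp.1 k).ne')
  have hfcont : ContinuousOn f P := by
    have hfeq : f = fun p => Finset.univ.inf' Finset.univ_nonempty
        (fun k => SIR V z p k / γ k) := by
      funext p
      exact (Finset.inf'_univ_eq_ciInf _).symm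
    rw [hfeq]
    exact ContinuousOn.finset_inf'_apply _ fun k _ => hSIRcont k
  obtain ⟨pbar, hpbarP, hpmax'⟩ := hPcomp.exists_isMaxOn hPne hfcont
  have hpmax : ∀ p ∈ P, f p ≤ f pbar := fun p hp => hpmax' hp
  set t : ℝ := f pbar with ht
  -- t > 0
  have htpos : 0 < t := by
    set m : ℝ := Finset.univ.inf' Finset.univ_nonempty phat with hm
    have hmpos : 0 < m := by
      rw [hm, Finset.lt_inf'_iff]
      exact fun n _ => hphat n
    have hmle : ∀ n, m ≤ phat n := fun n => Finset.inf'_le _ (Finset.mem_univ n)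
    set ε : ℝ := m / (K + 1) with hε
    have hεpos : 0 < ε := by positivity
    have hmem : (fun _ : Fin K => ε) ∈ P := by
      refine ⟨fun k => hεpos.le, fun n => ?_⟩
      rw [hmvC]
      have h1 : ∑ j, C n j * ε ≤ ∑ _j : Fin K, ε := by
        apply Finset.sum_le_sum
        intro j _
        rcases hC n j with h | h <;> rw [h] <;> nlinarith
      have h2 : ∑ _j : Fin K, ε = K * ε := by
        rw [Finset.sum_const, Finset.card_univ, Fintype.card_fin, nsmul_eq_mul]
      have h4 : ((K : ℝ) + 1) * ε = m := by
        rw [hε]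
        field_simp
      have h3 : (K : ℝ) * ε < m := by nlinarith
      calc ∑ j, C n j * ε ≤ ∑ _j : Fin K, ε := h1
        _ = K * ε := h2
        _ ≤ m := h3.le
        _ ≤ phat n := hmle n
    obtain ⟨k, hk⟩ := exists_eq_ciInf_of_finite (f := fun k => SIR V z (fun _ => ε) k / γ k)
    have hpos : 0 < SIR V z (fun _ => ε) k / γ k := by
      apply div_pos _ (hγ k)
      rw [SIR]
      exact div_pos hεpos (hden _ (fun _ => hεpos.le) k)
    calc (0:ℝ) < SIR V z (fun _ => ε) k / γ k := hpos
      _ = f (fun _ => ε) := hk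
      _ ≤ t := hpmax _ hmem
  -- any maximizer has positive entries
  have hqpos : ∀ q ∈ P, (∀ p ∈ P, f p ≤ f q) → ∀ k, 0 < q k := by
    intro q hq hqm k
    have h1 : t ≤ f q := hqm pbar hpbarP
    have h2 : t ≤ SIR V z q k / γ k := h1.trans (hfle q k)
    have h3 : 0 < SIR V z q k := by
      have h4 : 0 < SIR V z q k / γ k := lt_of_lt_of_le htpos h2
      have h5 := mul_pos h4 (hγ k)
      rwa [div_mul_cancel₀ _ (hγ k).ne'] at h5
    have hD := hden q hq.1 k
    by_contra hk
    push_neg at hk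
    have : q k = 0 := le_antisymm hk (hq.1 k)
    rw [SIR, this, zero_div] at h3
    exact lt_irrefl 0 h3
  -- balancedness of any maximizer
  have hbal : ∀ q ∈ P, (∀ p ∈ P, f p ≤ f q) → ∀ k, SIR V z q k / γ k = t := by
    set Sf : (Fin K → ℝ) → Finset (Fin K) :=
      fun q => Finset.univ.filter (fun k => SIR V z q k / γ k ≤ t) with hSf
    suffices key : ∀ n : ℕ, ∀ q ∈ P, (∀ p ∈ P, f p ≤ f q) → (Sf q).card = n →
        ∀ k, SIR V z q k / γ k = t by
      intro q hq hqm k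
      exact key (Sf q).card q hq hqm rfl k
    intro n
    induction n using Nat.strong_induction_on with
    | _ n IH =>
    intro q hq hqm hcard
    have hfq : f q = t := le_antisymm (hpmax q hq) (hqm pbar hpbarP)
    have hub : ∀ k, t ≤ SIR V z q k / γ k := fun k => hfq ▸ hfle q k
    have hqp : ∀ k, 0 < q k := hqpos q hq hqm
    by_cases hS : Sf q = Finset.univ
    · intro k
      have hk : k ∈ Sf q := by rw [hS]; exact Finset.mem_univ k
      rw [hSf, Finset.mem_filter] at hk
      exact le_antisymm hk.2 (hub k)
    · exfalso
      have hSne : (Sf q).Nonempty := by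
        obtain ⟨k0, hk0⟩ := exists_eq_ciInf_of_finite (f := fun k => SIR V z q k / γ k)
        refine ⟨k0, ?_⟩
        simp only [hSf, Finset.mem_filter, Finset.mem_univ, true_and]
        rw [hk0]
        exact le_of_eq hfq
      obtain ⟨i, hiS, j, hjS, hVij⟩ := hirr {k | k ∈ Sf q}
        (by obtain ⟨a, ha⟩ := hSne; exact ⟨a, ha⟩)
        (by
          intro h
          apply hS
          apply Finset.eq_univ_of_forall
          intro k
          have : k ∈ ({k | k ∈ Sf q} : Set (Fin K)) := by rw [h]; trivial
          exact this)
      have hiS' : i ∈ Sf q := hiS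
      have hjS' : j ∉ Sf q := hjS
      set Tc : Finset (Fin K) := Finset.univ.filter (fun k => k ∉ Sf q) with hTc
      have hTcne : Tc.Nonempty := ⟨j, by simp [hTc, hjS']⟩
      set c : ℝ := Tc.inf' hTcne (fun k => SIR V z q k / γ k) with hc
      have htc : t < c := by
        rw [hc, Finset.lt_inf'_iff]
        intro k hk
        have hk' : k ∉ Sf q := by simpa [hTc] using hk
        rw [hSf, Finset.mem_filter] at hk'
        push_neg at hk'
        exact hk' (Finset.mem_univ k)
      have hcle : ∀ k ∉ Sf q, c ≤ SIR V z q k / γ k := fun k hk =>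
        Finset.inf'_le _ (by simp [hTc, hk])
      have hcpos : 0 < c := htpos.trans htc
      set ε : ℝ := (1 - t / c) / 2 with hε
      have htc1 : t / c < 1 := (div_lt_one hcpos).mpr htc
      have hεpos : 0 < ε := by rw [hε]; linarith
      have hεlt : ε < 1 := by
        have : 0 ≤ t / c := div_nonneg htpos.le hcpos.le
        rw [hε]; linarith
      have hkey : ∀ x, c ≤ x → t < (1 - ε) * x := by
        intro x hcx
        have h1 : (1 - ε) * c = (c + t) / 2 := by
          rw [hε]
          field_simp
          ring
        have h2 : t < (1 - ε) * c := by rw [h1]; linarith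
        calc t < (1 - ε) * c := h2
          _ ≤ (1 - ε) * x := mul_le_mul_of_nonneg_left hcx (by linarith)
      set q' : Fin K → ℝ := fun k => if k ∈ Sf q then q k else (1 - ε) * q k with hq'
      have hq'le : ∀ k, q' k ≤ q k := by
        intro k
        rw [hq']
        dsimp only
        split
        · exact le_refl _
        · nlinarith [hqp k]
      have hq'pos : ∀ k, 0 < q' k := by
        intro k
        rw [hq']
        dsimp only
        split
        · exact hqp k
        · exact mul_pos (by linarith) (hqp k)
      have hq'P : q' ∈ P := by
        refine ⟨fun k => (hq'pos k).le, fun n => le_trans ?_ (hq.2 n)⟩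
        rw [hmvC, hmvC]
        exact Finset.sum_le_sum fun l _ => mul_le_mul_of_nonneg_left (hq'le l) (hC0 n l)
      have hD'le : ∀ k, V.mulVec q' k ≤ V.mulVec q k := by
        intro k
        rw [hmvV, hmvV]
        exact Finset.sum_le_sum fun l _ => mul_le_mul_of_nonneg_left (hq'le l) (hV k l)
      have hD'pos : ∀ k, 0 < V.mulVec q' k + z k := hden q' fun k => (hq'pos k).le
      have hDpos : ∀ k, 0 < V.mulVec q k + z k := hden q hq.1
      have haS : ∀ k ∈ Sf q, SIR V z q k ≤ SIR V z q' k := by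
        intro k hk
        have hqk' : q' k = q k := by rw [hq']; simp [hk]
        rw [SIR, SIR, hqk']
        exact div_le_div_of_nonneg_left (hq.1 k) (hD'pos k) (by linarith [hD'le k])
      have hbS : ∀ k ∉ Sf q, t < SIR V z q' k / γ k := by
        intro k hk
        have hqk' : q' k = (1 - ε) * q k := by rw [hq']; simp [hk]
        have h1 : (1 - ε) * SIR V z q k ≤ SIR V z q' k := by
          rw [SIR, SIR, hqk', ← mul_div_assoc]
          exact div_le_div_of_nonneg_left (mul_nonneg (by linarith) (hq.1 k)) (hD'pos k)
            (by linarith [hD'le k])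
        have h2 : t < (1 - ε) * (SIR V z q k / γ k) := hkey _ (hcle k hk)
        calc t < (1 - ε) * (SIR V z q k / γ k) := h2
          _ = ((1 - ε) * SIR V z q k) / γ k := by ring
          _ ≤ SIR V z q' k / γ k := (div_le_div_iff_of_pos_right (hγ k)).mpr h1
      have hDi : V.mulVec q' i < V.mulVec q i := by
        rw [hmvV, hmvV]
        apply Finset.sum_lt_sum
        · intro l _
          exact mul_le_mul_of_nonneg_left (hq'le l) (hV i l)
        · refine ⟨j, Finset.mem_univ j, ?_⟩
          have hqj : q' j = (1 - ε) * q j := by rw [hq']; simp [hjS']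
          rw [hqj]
          have hlt : (1 - ε) * q j < q j := by nlinarith [hqp j]
          exact mul_lt_mul_of_pos_left hlt hVij
      have hstrict : t < SIR V z q' i / γ i := by
        have h1 : SIR V z q i < SIR V z q' i := by
          rw [SIR, SIR]
          have hqi : q' i = q i := by rw [hq']; simp [hiS']
          rw [hqi]
          apply div_lt_div_of_pos_left (hqp i) (hD'pos i)
          linarith [hDi]
        calc t ≤ SIR V z q i / γ i := hub i
          _ < SIR V z q' i / γ i := (div_lt_div_iff_of_pos_right (hγ i)).mpr h1
      have hq'lb : ∀ k, t ≤ SIR V z q' k / γ k := by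
        intro k
        by_cases hk : k ∈ Sf q
        · calc t ≤ SIR V z q k / γ k := hub k
            _ ≤ SIR V z q' k / γ k := (div_le_div_iff_of_pos_right (hγ k)).mpr (haS k hk)
        · exact (hbS k hk).le
      have hfq' : f q' = t := le_antisymm (hpmax q' hq'P) (le_ciInf hq'lb)
      have hq'max : ∀ p ∈ P, f p ≤ f q' := fun p hp =>
        le_trans (hpmax p hp) (le_of_eq hfq'.symm)
      have hsub' : Sf q' ⊆ (Sf q).erase i := by
        intro k hk
        have hk2 : SIR V z q' k / γ k ≤ t := by
          rw [hSf, Finset.mem_filter] at hk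
          exact hk.2
        rw [Finset.mem_erase]
        constructor
        · rintro rfl
          exact absurd hk2 (not_le.mpr hstrict)
        · by_contra hkS
          exact absurd hk2 (not_le.mpr (hbS k hkS))
      have hcard' : (Sf q').card < n := by
        calc (Sf q').card ≤ ((Sf q).erase i).card := Finset.card_le_card hsub'
          _ < (Sf q).card := Finset.card_erase_lt_of_mem hiS'
          _ = n := hcard
      have hall := IH _ hcard' q' hq'P hq'max rfl
      have hK' : (Sf q').card = K := by
        have huniv : Sf q' = Finset.univ := by
          apply Finset.eq_univ_of_forall
          intro k
          rw [hSf, Finset.mem_filter]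
          exact ⟨Finset.mem_univ k, (hall k).le⟩
        rw [huniv, Finset.card_univ, Fintype.card_fin]
      have hnK : n ≤ K := by
        rw [← hcard]
        calc (Sf q).card ≤ Finset.univ.card := Finset.card_le_univ _
          _ = K := by rw [Finset.card_univ, Fintype.card_fin]
      omega
  -- fixed point equation
  have heq : ∀ q ∈ P, (∀ p ∈ P, f p ≤ f q) →
      ∀ k, q k = t * γ k * (V.mulVec q k + z k) := by
    intro q hq hqm k
    have h1 := hbal q hq hqm k
    have hD := hden q hq.1 k
    rw [SIR] at h1
    field_simp at h1
    rw [div_eq_iff (hγ k).ne'] at h1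
    rw [h1]; ring
  -- uniqueness: any two maximizers are equal (one-sided ≤)
  have hle : ∀ q ∈ P, ∀ r ∈ P, (∀ p ∈ P, f p ≤ f q) → (∀ p ∈ P, f p ≤ f r) →
      ∀ k, q k ≤ r k := by
    intro q hq r hr hqm hrm
    by_contra hcon
    push_neg at hcon
    obtain ⟨kw, hkw⟩ := hcon
    set d : Fin K → ℝ := fun k => q k - r k with hd
    obtain ⟨k0, -, hk0⟩ := Finset.exists_max_image Finset.univ (fun k => d k / q k)
      ⟨kw, Finset.mem_univ kw⟩
    set α : ℝ := d k0 / q k0 with hα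
    have hqp := hqpos q hq hqm
    have hrp := hqpos r hr hrm
    have hαpos : 0 < α := by
      have h1 : 0 < d kw / q kw := div_pos (by simp [hd]; linarith) (hqp kw)
      exact h1.trans_le (hk0 kw (Finset.mem_univ kw))
    have hdle : ∀ l, d l ≤ α * q l := by
      intro l
      have := hk0 l (Finset.mem_univ l)
      rwa [div_le_iff₀ (hqp l)] at this
    have heq1 : d k0 = t * γ k0 * (∑ l, V k0 l * d l) := by
      have h1 := heq q hq hqm k0
      have h2 := heq r hr hrm k0
      simp only [hmvV] at h1 h2
      have h3 : (∑ l, V k0 l * d l) = (∑ l, V k0 l * q l) - ∑ l, V k0 l * r l := by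
        rw [← Finset.sum_sub_distrib]
        exact Finset.sum_congr rfl fun l _ => by simp only [hd]; ring
      simp only [hd]
      rw [h3, h1, h2]
      ring
    have hbound : ∑ l, V k0 l * d l ≤ α * V.mulVec q k0 := by
      rw [hmvV, Finset.mul_sum]
      apply Finset.sum_le_sum
      intro l _
      calc V k0 l * d l ≤ V k0 l * (α * q l) :=
            mul_le_mul_of_nonneg_left (hdle l) (hV k0 l)
        _ = α * (V k0 l * q l) := by ring
    have hfinal : d k0 < d k0 := by
      have h1 : d k0 ≤ t * γ k0 * (α * V.mulVec q k0) := by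
        rw [heq1]
        exact mul_le_mul_of_nonneg_left hbound
          (mul_nonneg htpos.le (hγ k0).le)
      have h2 : t * γ k0 * (V.mulVec q k0 + z k0) = q k0 := (heq q hq hqm k0).symm
      have h3 : α * q k0 = d k0 := by
        rw [hα, div_mul_cancel₀]
        exact (hqp k0).ne'
      nlinarith [mul_pos (mul_pos htpos (hγ k0)) (hz k0), hαpos]
    exact lt_irrefl _ hfinal
  refine ⟨pbar, ⟨hpbarP, hpmax⟩, ?_⟩
  intro y hy
  funext k
  exact le_antisymm (hle y hy.1 pbar hpbarP hy.2 hpmax k)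
    (hle pbar hpbarP y hy.1 hpmax hy.2 k)
end

section
/- Every max-min SIR-balanced power vector p̄ ∈ P satisfies max_{1≤n≤N} g_n(p̄) = 1; that is, Cp̄ ≤ p̂ holds entrywise and (Cp̄)_n = P_n for at least one index n (at least one power constraint is active at the optimum). -/
open Matrix

private lemma ciInf_lt_ciInf_of_lt {K : ℕ} [Nonempty (Fin K)] {f g : Fin K → ℝ}
    (h : ∀ k, f k < g k) : (⨅ k, f k) < ⨅ k, g k := by
  obtain ⟨i, hi⟩ := Finite.exists_min g
  calc (⨅ k, f k) ≤ f i := ciInf_le (Set.Finite.bddBelow (Set.finite_range f)) i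
    _ < g i := h i
    _ ≤ ⨅ k, g k := le_ciInf hi

theorem stmt2    {K N : ℕ} (hK : 2 ≤ K) (hN : 1 ≤ N)
    (V : Matrix (Fin K) (Fin K) ℝ) (z γ : Fin K → ℝ)
    (C : Matrix (Fin N) (Fin K) ℝ) (phat : Fin N → ℝ)
    (hV : ∀ i j, 0 ≤ V i j) (hVdiag : ∀ i, V i i = 0)
    (hz : ∀ k, 0 < z k) (hγ : ∀ k, 0 < γ k)
    (hC : ∀ n k, C n k = 0 ∨ C n k = 1) (hCcol : ∀ k, ∃ n, C n k = 1)
    (hphat : ∀ n, 0 < phat n)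
    (pbar : Fin K → ℝ) (hbal : MaxMinBalanced V z γ C phat pbar) :
    (∀ n, C.mulVec pbar n ≤ phat n) ∧ ∃ n, C.mulVec pbar n = phat n := by
  obtain ⟨⟨hpos, hfeas⟩, hopt⟩ := hbal
  refine ⟨hfeas, ?_⟩
  by_contra hact
  push_neg at hact
  have hstrict : ∀ n, C.mulVec pbar n < phat n :=
    fun n => lt_of_le_of_ne (hfeas n) (hact n)
  have hNne : Nonempty (Fin N) := ⟨⟨0, hN⟩⟩
  have hKne : Nonempty (Fin K) := ⟨⟨0, by omega⟩⟩
  have hCnn : ∀ n k, (0:ℝ) ≤ C n k := by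
    intro n k; rcases hC n k with h | h <;> rw [h] <;> norm_num
  have hden : ∀ (p : Fin K → ℝ), (∀ k, 0 ≤ p k) → ∀ k, 0 < V.mulVec p k + z k := by
    intro p hp k
    have h1 : 0 ≤ V.mulVec p k := by
      rw [Matrix.mulVec, dotProduct]
      exact Finset.sum_nonneg fun j _ => mul_nonneg (hV k j) (hp j)
    linarith [hz k]
  -- it suffices to find a feasible p' strictly better than pbar
  suffices hbetter : ∃ p' ∈ Pset C phat,
      (⨅ k, SIR V z pbar k / γ k) < ⨅ k, SIR V z p' k / γ k by
    obtain ⟨p', hp', hlt⟩ := hbetter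
    exact absurd (hopt p' hp') (not_le.mpr hlt)
  by_cases hall : ∀ k, 0 < pbar k
  · -- scale pbar by t > 1
    set δ := Finset.univ.inf' Finset.univ_nonempty (fun n => phat n - C.mulVec pbar n) with hδ
    have hδpos : 0 < δ := by
      rw [hδ, Finset.lt_inf'_iff]
      intro n _; linarith [hstrict n]
    have hδle : ∀ n, δ ≤ phat n - C.mulVec pbar n := by
      intro n; exact Finset.inf'_le _ (Finset.mem_univ n)
    have hmvnn : ∀ n, 0 ≤ C.mulVec pbar n := by
      intro n; rw [Matrix.mulVec, dotProduct]
      exact Finset.sum_nonneg fun k _ => mul_nonneg (hCnn n k) (hpos k)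
    set T := (∑ n, C.mulVec pbar n) + δ with hT
    have hTpos : 0 < T := by
      have : 0 ≤ ∑ n, C.mulVec pbar n := Finset.sum_nonneg fun n _ => hmvnn n
      rw [hT]; linarith
    set t := 1 + δ / T with ht
    have ht1 : 1 < t := by
      rw [ht]; have := div_pos hδpos hTpos; linarith
    refine ⟨t • pbar, ⟨?_, ?_⟩, ?_⟩
    · intro k
      exact mul_nonneg (by linarith) (hpos k)
    · intro n
      rw [Matrix.mulVec_smul]
      have hcT : C.mulVec pbar n ≤ T := by
        rw [hT]
        have := Finset.single_le_sum (f := fun m => C.mulVec pbar m)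
          (fun m _ => hmvnn m) (Finset.mem_univ n)
        linarith
      have h1 : (δ / T) * C.mulVec pbar n ≤ δ := by
        calc (δ / T) * C.mulVec pbar n ≤ (δ / T) * T := by
              apply mul_le_mul_of_nonneg_left hcT (le_of_lt (div_pos hδpos hTpos))
          _ = δ := by field_simp
      have : (t • C.mulVec pbar) n = t * C.mulVec pbar n := rfl
      rw [this, ht]
      have := hδle n
      nlinarith [hmvnn n]
    · apply ciInf_lt_ciInf_of_lt
      intro k
      have hSIR : SIR V z (t • pbar) k = t * pbar k / (t * V.mulVec pbar k + z k) := by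
        simp [SIR, Matrix.mulVec_smul, smul_eq_mul]
      have hd1 := hden pbar hpos k
      have hd2 : 0 < t * V.mulVec pbar k + z k := by
        have h1 : 0 ≤ V.mulVec pbar k := by
          rw [Matrix.mulVec, dotProduct]
          exact Finset.sum_nonneg fun j _ => mul_nonneg (hV k j) (hpos j)
        nlinarith [hz k]
      have hlt : SIR V z pbar k < SIR V z (t • pbar) k := by
        rw [hSIR, SIR, div_lt_div_iff₀ hd1 hd2]
        nlinarith [mul_pos (mul_pos (hall k) (hz k)) (sub_pos.mpr ht1)]
      exact div_lt_div_of_pos_right hlt (hγ k)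
  · -- pbar has a zero entry: beat it with a small positive constant vector
    push_neg at hall
    obtain ⟨k0, hk0⟩ := hall
    have hk0z : pbar k0 = 0 := le_antisymm hk0 (hpos k0)
    set m := Finset.univ.inf' Finset.univ_nonempty phat with hm
    have hmpos : 0 < m := by
      rw [hm, Finset.lt_inf'_iff]; intro n _; exact hphat n
    set ε := m / K with hε
    have hεpos : 0 < ε := div_pos hmpos (by positivity)
    refine ⟨fun _ => ε, ⟨fun k => le_of_lt hεpos, ?_⟩, ?_⟩
    · intro n
      have h1 : C.mulVec (fun _ => ε) n = ∑ k, C n k * ε := by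
        simp [Matrix.mulVec, dotProduct]
      rw [h1]
      have h2 : ∑ k, C n k * ε ≤ ∑ k : Fin K, 1 * ε := by
        apply Finset.sum_le_sum
        intro k _
        apply mul_le_mul_of_nonneg_right _ (le_of_lt hεpos)
        rcases hC n k with h | h <;> rw [h] <;> norm_num
      have h3 : ∑ k : Fin K, (1:ℝ) * ε = K * ε := by
        simp [Finset.sum_const, mul_comm]
      have h4 : (K:ℝ) * ε = m := by
        rw [hε]; field_simp
      have h5 : m ≤ phat n := Finset.inf'_le _ (Finset.mem_univ n)
      linarith
    · have hzero : SIR V z pbar k0 / γ k0 = 0 := by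
        rw [SIR, hk0z, zero_div, zero_div]
      have hle : (⨅ k, SIR V z pbar k / γ k) ≤ 0 := by
        rw [← hzero]
        exact ciInf_le (Set.Finite.bddBelow (Set.finite_range _)) k0
      have hq : ∀ k, 0 < SIR V z (fun _ => ε) k / γ k := by
        intro k
        apply div_pos _ (hγ k)
        exact div_pos hεpos (hden _ (fun _ => le_of_lt hεpos) k)
      obtain ⟨i, hi⟩ := Finite.exists_min (fun k => SIR V z (fun _ => ε) k / γ k)
      calc (⨅ k, SIR V z pbar k / γ k) ≤ 0 := hle
        _ < SIR V z (fun _ => ε) i / γ i := hq i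
        _ ≤ ⨅ k, SIR V z (fun _ => ε) k / γ k := le_ciInf hi
end

section
/- If the gain matrix V is irreducible and p̄ ∈ P is a max-min SIR-balanced power vector, then all weighted SIRs are balanced at p̄: there exists a constant β > 0 such that γ_k/SIR_k(p̄) = β for every k = 1,…,K. -/
open Matrix

/-- finite infimum is attained -/
lemma iInf_attained {K : ℕ} [Nonempty (Fin K)] (f : Fin K → ℝ) :
    ∃ k, (⨅ j, f j) = f k ∧ ∀ j, f k ≤ f j := by
  obtain ⟨k, hk⟩ := Finite.exists_min f
  exact ⟨k, le_antisymm (ciInf_le (Finite.bddBelow_range f) k) (le_ciInf hk), hk⟩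

lemma key_lemma {K N : ℕ} (V : Matrix (Fin K) (Fin K) ℝ) (z γ : Fin K → ℝ)
    (C : Matrix (Fin N) (Fin K) ℝ) (phat : Fin N → ℝ)
    (hV : ∀ i j, 0 ≤ V i j) (hz : ∀ k, 0 < z k) (hγ : ∀ k, 0 < γ k)
    (hC : ∀ n k, 0 ≤ C n k) (hirr : MatIrred V) (β : ℝ) (hβ : 0 < β) :
    ∀ n : ℕ, ∀ p, ((∀ k, 0 ≤ p k) ∧ ∀ m, C.mulVec p m ≤ phat m) → (∀ k, 0 < p k) →
      (∀ k, β ≤ SIR V z p k / γ k) →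
      (Finset.univ.filter (fun k => SIR V z p k / γ k ≤ β)).card ≤ n →
      (∃ k, β < SIR V z p k / γ k) →
      ∃ q, (((∀ k, 0 ≤ q k) ∧ ∀ m, C.mulVec q m ≤ phat m) ∧ ∀ k, β < SIR V z q k / γ k) := by
  intro n
  induction n with
  | zero =>
    intro p hp hppos hge hcard _
    refine ⟨p, hp, fun k => ?_⟩
    rcases lt_or_ge β (SIR V z p k / γ k) with h | h
    · exact h
    · exfalso
      have : k ∈ Finset.univ.filter (fun k => SIR V z p k / γ k ≤ β) := by
        simp [h]
      have := Finset.card_pos.mpr ⟨k, this⟩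
      omega
  | succ n ih =>
    intro p hp hppos hge hcard hex
    set S := Finset.univ.filter (fun k => SIR V z p k / γ k ≤ β) with hSdef
    by_cases hSne : S.Nonempty
    · -- S nonempty; get irreducibility witness
      obtain ⟨kw, hkw⟩ := hex
      have hkwS : kw ∉ S := by simp [hSdef, not_le.mpr hkw]
      have hSneq : (↑S : Set (Fin K)) ≠ Set.univ := by
        intro h
        have : kw ∈ (↑S : Set (Fin K)) := h ▸ Set.mem_univ kw
        exact hkwS (by exact_mod_cast this)
      obtain ⟨i, hiS, j, hjS, hVij⟩ := hirr (↑S) (by exact_mod_cast hSne.to_set) hSneq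
      have hiS' : i ∈ S := hiS
      have hjS' : j ∉ S := hjS
      -- the complement is nonempty
      have hcomp : (Sᶜ : Finset (Fin K)).Nonempty := ⟨j, Finset.mem_compl.mpr hjS'⟩
      set m := (Sᶜ : Finset (Fin K)).inf' hcomp (fun k => SIR V z p k / γ k) with hmdef
      have hβm : β < m := by
        rw [hmdef, Finset.lt_inf'_iff]
        intro k hk
        have : k ∉ S := Finset.mem_compl.mp hk
        have : ¬ (SIR V z p k / γ k ≤ β) := by simpa [hSdef] using this
        linarith [not_le.mp this]
      have hm0 : 0 < m := lt_trans hβ hβm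
      set ε := (1 - β / m) / 2 with hεdef
      have hε0 : 0 < ε := by
        have : β / m < 1 := (div_lt_one hm0).mpr hβm
        rw [hεdef]; linarith
      have hε1 : ε < 1 := by
        have : 0 < β / m := div_pos hβ hm0
        rw [hεdef]; linarith
      have hεm : β < (1 - ε) * m := by
        have h1 : (1 - ε) * m = (m + β) / 2 := by
          rw [hεdef]; field_simp; ring
        rw [h1]; linarith
      set q : Fin K → ℝ := fun k => if k ∈ S then p k else (1 - ε) * p k with hqdef
      have hqpos : ∀ k, 0 < q k := by
        intro k
        rw [hqdef]
        by_cases h : k ∈ S <;> simp [h]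
        · exact hppos k
        · exact mul_pos (by linarith) (hppos k)
      have hqle : ∀ k, q k ≤ p k := by
        intro k
        rw [hqdef]
        by_cases h : k ∈ S <;> simp [h]
        nlinarith [hppos k, (hppos k).le]
      have hmulle : ∀ k, V.mulVec q k ≤ V.mulVec p k := by
        intro k
        unfold Matrix.mulVec dotProduct
        exact Finset.sum_le_sum fun l _ => mul_le_mul_of_nonneg_left (hqle l) (hV k l)
      have hCmulle : ∀ n', C.mulVec q n' ≤ C.mulVec p n' := by
        intro n'
        unfold Matrix.mulVec dotProduct
        exact Finset.sum_le_sum fun l _ => mul_le_mul_of_nonneg_left (hqle l) (hC n' l)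
      have hqP : (∀ k, 0 ≤ q k) ∧ ∀ m, C.mulVec q m ≤ phat m :=
        ⟨fun k => (hqpos k).le, fun n' => le_trans (hCmulle n') (hp.2 n')⟩
      have hdenq : ∀ k, 0 < V.mulVec q k + z k := by
        intro k
        have : 0 ≤ V.mulVec q k := by
          unfold Matrix.mulVec dotProduct
          exact Finset.sum_nonneg fun l _ => mul_nonneg (hV k l) (hqpos l).le
        linarith [hz k]
      have hdenp : ∀ k, 0 < V.mulVec p k + z k := by
        intro k
        have : 0 ≤ V.mulVec p k := by
          unfold Matrix.mulVec dotProduct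
          exact Finset.sum_nonneg fun l _ => mul_nonneg (hV k l) (hppos l).le
        linarith [hz k]
      -- case k ∈ S : ratio does not decrease
      have hcaseS : ∀ k ∈ S, SIR V z p k / γ k ≤ SIR V z q k / γ k := by
        intro k hk
        have h1 : SIR V z p k ≤ SIR V z q k := by
          unfold SIR
          have hq : q k = p k := by rw [hqdef]; simp [hk]
          rw [hq]
          gcongr
          · exact (hppos k).le
          · exact hdenq k
          · exact hmulle k
        gcongr
        exact (hγ k).le
      -- case k ∉ S : ratio at least (1-ε) times old
      have hcaseC : ∀ k, k ∉ S → β < SIR V z q k / γ k := by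
        intro k hk
        have hq : q k = (1 - ε) * p k := by rw [hqdef]; simp [hk]
        have h1 : (1 - ε) * SIR V z p k ≤ SIR V z q k := by
          unfold SIR
          rw [hq, mul_div_assoc]
          gcongr
          · exact (hppos k).le
          · exact hdenq k
          · exact hmulle k
        have h2 : m ≤ SIR V z p k / γ k := by
          rw [hmdef]
          exact Finset.inf'_le _ (Finset.mem_compl.mpr hk)
        have h3 : (1 - ε) * (SIR V z p k / γ k) ≤ SIR V z q k / γ k := by
          rw [← mul_div_assoc]
          gcongr
          exact (hγ k).le
        have h4 : (1 - ε) * m ≤ (1 - ε) * (SIR V z p k / γ k) := by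
          gcongr
        linarith
      -- case k = i : strict increase
      have hcaseI : SIR V z p i / γ i < SIR V z q i / γ i := by
        have hlt : V.mulVec q i < V.mulVec p i := by
          unfold Matrix.mulVec dotProduct
          apply Finset.sum_lt_sum
          · intro l _
            exact mul_le_mul_of_nonneg_left (hqle l) (hV i l)
          · refine ⟨j, Finset.mem_univ j, ?_⟩
            have hq : q j = (1 - ε) * p j := by rw [hqdef]; simp [hjS']
            rw [hq]
            have hpj := hppos j
            nlinarith [mul_pos (mul_pos hε0 hVij) hpj]
        have h1 : SIR V z p i < SIR V z q i := by
          unfold SIR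
          have hq : q i = p i := by rw [hqdef]; simp [hiS']
          rw [hq]
          gcongr
          · exact hppos i
          · exact hdenq i
        gcongr
        exact hγ i
      -- new tight set is strictly smaller
      have hge' : ∀ k, β ≤ SIR V z q k / γ k := by
        intro k
        by_cases hk : k ∈ S
        · exact le_trans (hge k) (hcaseS k hk)
        · exact (hcaseC k hk).le
      have hexi : β < SIR V z q i / γ i := lt_of_le_of_lt (hge i) hcaseI
      have hsub : Finset.univ.filter (fun k => SIR V z q k / γ k ≤ β) ⊆ S.erase i := by
        intro k hk
        have hkle : SIR V z q k / γ k ≤ β := by simpa using hk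
        have hkS : k ∈ S := by
          by_contra h
          exact absurd hkle (not_le.mpr (hcaseC k h))
        refine Finset.mem_erase.mpr ⟨?_, hkS⟩
        rintro rfl
        exact absurd hkle (not_le.mpr hexi)
      have hcard' : (Finset.univ.filter (fun k => SIR V z q k / γ k ≤ β)).card ≤ n := by
        have h1 := Finset.card_le_card hsub
        have h2 : (S.erase i).card = S.card - 1 := Finset.card_erase_of_mem hiS'
        have h3 : 0 < S.card := Finset.card_pos.mpr hSne
        omega
      exact ih q hqP hqpos hge' hcard' ⟨i, hexi⟩
    · -- S empty : all ratios already above β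
      refine ⟨p, hp, fun k => ?_⟩
      rcases lt_or_ge β (SIR V z p k / γ k) with h | h
      · exact h
      · exact absurd ⟨k, by simp [hSdef, h]⟩ hSne

theorem stmt3    {K N : ℕ} (hK : 2 ≤ K) (hN : 1 ≤ N)
    (V : Matrix (Fin K) (Fin K) ℝ) (z γ : Fin K → ℝ)
    (C : Matrix (Fin N) (Fin K) ℝ) (phat : Fin N → ℝ)
    (hV : ∀ i j, 0 ≤ V i j) (hVdiag : ∀ i, V i i = 0)
    (hz : ∀ k, 0 < z k) (hγ : ∀ k, 0 < γ k)
    (hC : ∀ n k, C n k = 0 ∨ C n k = 1) (hCcol : ∀ k, ∃ n, C n k = 1)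
    (hphat : ∀ n, 0 < phat n)
    (hirr : MatIrred V)
    (pbar : Fin K → ℝ) (hbal : MaxMinBalanced V z γ C phat pbar) :
    ∃ β : ℝ, 0 < β ∧ ∀ k, γ k / SIR V z pbar k = β := by
  haveI : Nonempty (Fin K) := ⟨⟨0, by omega⟩⟩
  haveI : Nonempty (Fin N) := ⟨⟨0, by omega⟩⟩
  have hC0 : ∀ n k, 0 ≤ C n k := fun n k => by rcases hC n k with h | h <;> simp [h]
  have hC1 : ∀ n k, C n k ≤ 1 := fun n k => by rcases hC n k with h | h <;> simp [h]
  -- a strictly positive feasible point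
  set t0 := Finset.univ.inf' Finset.univ_nonempty phat with ht0
  have ht0pos : 0 < t0 := by
    rw [ht0, Finset.lt_inf'_iff]
    intro n _
    exact hphat n
  have hKpos : (0:ℝ) < (K:ℝ) := by exact_mod_cast Nat.lt_of_lt_of_le (by norm_num) hK
  set t := t0 / K with htdef
  have htpos : 0 < t := div_pos ht0pos hKpos
  set p0 : Fin K → ℝ := fun _ => t with hp0def
  have hp0P : p0 ∈ Pset C phat := by
    refine ⟨fun k => htpos.le, fun n => ?_⟩
    have h1 : C.mulVec p0 n ≤ ∑ _k : Fin K, t := by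
      unfold Matrix.mulVec dotProduct
      refine Finset.sum_le_sum fun k _ => ?_
      calc C n k * p0 k = C n k * t := rfl
        _ ≤ 1 * t := mul_le_mul_of_nonneg_right (hC1 n k) htpos.le
        _ = t := one_mul t
    have h2 : (∑ _k : Fin K, t) = (K:ℝ) * t := by
      simp [Finset.sum_const, Finset.card_univ, nsmul_eq_mul]
    have h3 : (K:ℝ) * t = t0 := by
      rw [htdef]
      field_simp
    have h4 : t0 ≤ phat n := Finset.inf'_le _ (Finset.mem_univ n)
    linarith
  have hdenpos : ∀ (p : Fin K → ℝ), (∀ k, 0 ≤ p k) → ∀ k, 0 < V.mulVec p k + z k := by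
    intro p hp k
    have : 0 ≤ V.mulVec p k := by
      unfold Matrix.mulVec dotProduct
      exact Finset.sum_nonneg fun l _ => mul_nonneg (hV k l) (hp l)
    linarith [hz k]
  set β := ⨅ k, SIR V z pbar k / γ k with hβdef
  -- β is positive
  have hβpos : 0 < β := by
    obtain ⟨k0, hk0eq, hk0min⟩ := iInf_attained (fun k => SIR V z p0 k / γ k)
    have h1 : 0 < SIR V z p0 k0 / γ k0 := by
      apply div_pos _ (hγ k0)
      unfold SIR
      exact div_pos htpos (hdenpos p0 (fun k => htpos.le) k0)
    have h2 := hbal.2 p0 hp0P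
    rw [← hβdef] at h2
    rw [hk0eq] at h2
    linarith
  have hβle : ∀ k, β ≤ SIR V z pbar k / γ k := fun k =>
    ciInf_le (Finite.bddBelow_range _) k
  -- pbar is strictly positive
  have hpbarpos : ∀ k, 0 < pbar k := by
    intro k
    rcases lt_or_eq_of_le (hbal.1.1 k) with h | h
    · exact h
    · exfalso
      have hs : SIR V z pbar k = 0 := by simp [SIR, ← h]
      have := hβle k
      rw [hs, zero_div] at this
      linarith
  -- all ratios equal β
  have hall : ∀ k, SIR V z pbar k / γ k = β := by
    by_contra hcon
    push_neg at hcon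
    obtain ⟨kk, hkk⟩ := hcon
    have hkk' : β < SIR V z pbar kk / γ kk := lt_of_le_of_ne (hβle kk) (Ne.symm hkk)
    obtain ⟨q, hqP, hq⟩ := key_lemma V z γ C phat hV hz hγ hC0 hirr β hβpos
      (Finset.univ.filter (fun k => SIR V z pbar k / γ k ≤ β)).card
      pbar ⟨hbal.1.1, hbal.1.2⟩ hpbarpos hβle le_rfl ⟨kk, hkk'⟩
    obtain ⟨k1, hk1eq, hk1min⟩ := iInf_attained (fun k => SIR V z q k / γ k)
    have h2 := hbal.2 q hqP
    rw [← hβdef, hk1eq] at h2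
    exact absurd h2 (not_le.mpr (hq k1))
  refine ⟨β⁻¹, inv_pos.mpr hβpos, fun k => ?_⟩
  have h := hall k
  have hγk : γ k ≠ 0 := (hγ k).ne'
  have hs : SIR V z pbar k = β * γ k := (div_eq_iff hγk).mp h
  rw [hs]
  field_simp
end

section
/- Suppose the gain matrix V is irreducible, p̄ ∈ P is the max-min SIR-balanced power vector, and β > 0 is the common value of γ_k/SIR_k(p̄) over k = 1,…,K. Then for every n ∈ N₀(p̄), both eigenvalue equations hold: B^(n) p̄ = β p̄, and A^(n) p̃ = β p̃ where p̃ = (p̄, 1) ∈ ℝ^{K+1} is the extended power vector. -/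
open Matrix

theorem stmt4    {K N : ℕ} (hK : 2 ≤ K) (hN : 1 ≤ N)
    (V : Matrix (Fin K) (Fin K) ℝ) (z γ : Fin K → ℝ)
    (C : Matrix (Fin N) (Fin K) ℝ) (phat : Fin N → ℝ)
    (hV : ∀ i j, 0 ≤ V i j) (hVdiag : ∀ i, V i i = 0)
    (hz : ∀ k, 0 < z k) (hγ : ∀ k, 0 < γ k)
    (hC : ∀ n k, C n k = 0 ∨ C n k = 1) (hCcol : ∀ k, ∃ n, C n k = 1)
    (hphat : ∀ n, 0 < phat n)
    (hirr : MatIrred V)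
    (pbar : Fin K → ℝ) (hbal : MaxMinBalanced V z γ C phat pbar)
    (β : ℝ) (hβ : 0 < β) (hcomm : ∀ k, γ k / SIR V z pbar k = β) :
    ∀ n ∈ activeSet C phat pbar,
      (Bmat V z γ C phat n) *ᵥ pbar = β • pbar ∧
      (Amat V z γ C phat n) *ᵥ (Fin.snoc pbar 1) = β • (Fin.snoc pbar 1 : Fin (K+1) → ℝ) := by
  intro n hn
  have hmv : ∀ k, (V *ᵥ pbar) k = ∑ j, V k j * pbar j := fun k => rfl
  have hcv : (C *ᵥ pbar) n = ∑ k, C n k * pbar k := rfl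
  have hp0 : ∀ k, 0 ≤ pbar k := hbal.1.1
  have hd : ∀ k, 0 < V.mulVec pbar k + z k := by
    intro k
    have h0 : 0 ≤ (V *ᵥ pbar) k := by
      rw [hmv]
      exact Finset.sum_nonneg (fun j _ => mul_nonneg (hV k j) (hp0 j))
    linarith [hz k]
  have key : ∀ k, γ k * (V.mulVec pbar k + z k) = β * pbar k := by
    intro k
    have h := hcomm k
    rw [SIR] at h
    have hpk : pbar k ≠ 0 := by
      intro h0
      rw [h0] at h
      simp at h
      exact hβ.ne' h.symm
    have hdk := (hd k).ne'
    field_simp at h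
    linarith [h]
  have hact : C.mulVec pbar n = phat n := by
    have h1 := hn.1
    rw [gcon, div_eq_one_iff_eq (hphat n).ne'] at h1
    exact h1
  have hsum : ∑ k, C n k * (γ k * (V.mulVec pbar k + z k)) = β * phat n := by
    calc ∑ k, C n k * (γ k * (V.mulVec pbar k + z k))
        = ∑ k, C n k * (β * pbar k) := by
          refine Finset.sum_congr rfl (fun k _ => ?_)
          rw [key k]
      _ = β * ∑ k, C n k * pbar k := by rw [Finset.mul_sum]; congr 1; funext k; ring
      _ = β * phat n := by rw [← hcv, hact]
  constructor
  · funext k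
    have hsum2 : ∑ x, C n x * pbar x = phat n := hact
    have hB : (Bmat V z γ C phat n *ᵥ pbar) k
        = γ k * (V.mulVec pbar k + z k) := by
      show ∑ j, Bmat V z γ C phat n k j * pbar j = _
      simp only [Bmat, Matrix.diagonal_mul, Matrix.add_apply, Matrix.smul_apply,
        Matrix.vecMulVec_apply, smul_eq_mul]
      rw [hmv]
      have hterm : ∀ x, γ k * (V k x + (phat n)⁻¹ * (z k * C n x)) * pbar x
          = γ k * (V k x * pbar x) + (γ k * (phat n)⁻¹ * z k) * (C n x * pbar x) :=
        fun x => by ring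
      rw [Finset.sum_congr rfl (fun x _ => hterm x), Finset.sum_add_distrib,
        ← Finset.mul_sum, ← Finset.mul_sum, hsum2]
      have hb : (phat n)⁻¹ * phat n = 1 := inv_mul_cancel₀ (hphat n).ne'
      linear_combination (γ k * z k) * hb
    rw [hB, key k]
    simp
  · funext i
    show ∑ j, Amat V z γ C phat n i j * (Fin.snoc pbar 1 : Fin (K+1) → ℝ) j
        = β * (Fin.snoc pbar 1 : Fin (K+1) → ℝ) i
    rw [Fin.sum_univ_castSucc]
    refine Fin.lastCases ?_ ?_ i
    · -- last row
      have hKlt : ¬ ((Fin.last K : Fin (K+1)) : ℕ) < K := by simp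
      simp only [Amat, Matrix.of_apply, dif_neg hKlt, Fin.coe_castSucc, Fin.is_lt,
        dif_pos, Fin.snoc_castSucc, Fin.snoc_last, mul_one, Fin.eta]
      have h1 : ∑ x : Fin K, ((phat n)⁻¹ * ∑ k, C n k * (γ k * V k x)) * pbar x
          = (phat n)⁻¹ * ∑ k, C n k * (γ k * ∑ x, V k x * pbar x) := by
        simp only [Finset.mul_sum, Finset.sum_mul]
        rw [Finset.sum_comm]
        refine Finset.sum_congr rfl (fun k _ => Finset.sum_congr rfl (fun x _ => ?_))
        ring
      rw [h1, ← mul_add, ← Finset.sum_add_distrib]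
      have h2 : ∑ k, (C n k * (γ k * ∑ x, V k x * pbar x) + C n k * (γ k * z k))
          = ∑ k, C n k * (γ k * (V.mulVec pbar k + z k)) := by
        refine Finset.sum_congr rfl (fun k _ => ?_)
        rw [hmv]
        ring
      rw [h2, hsum]
      have hb : (phat n)⁻¹ * phat n = 1 := inv_mul_cancel₀ (hphat n).ne'
      linear_combination β * hb
    · intro i
      have hi : ((Fin.castSucc i : Fin (K+1)) : ℕ) < K := i.isLt
      simp only [Amat, Matrix.of_apply, dif_pos hi, Fin.coe_castSucc, Fin.is_lt,
        dif_pos, Fin.val_last, lt_irrefl, dif_neg, not_lt, le_refl,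
        Fin.snoc_castSucc, Fin.snoc_last, mul_one, Fin.eta]
      rw [dif_neg not_false]
      have h3 : ∑ x : Fin K, γ i * V i x * pbar x
          = γ i * ∑ x, V i x * pbar x := by
        rw [Finset.mul_sum]
        refine Finset.sum_congr rfl (fun x _ => ?_)
        ring
      rw [h3, ← hmv]
      have := key i
      linarith [key i]
end

section
/- If the gain matrix V is irreducible, then for every n = 1,…,N the spectral radii of the extended matrix and of the reduced matrix coincide: ρ(A^(n)) = ρ(B^(n)). -/
open Matrix

section Aux

lemma mem_spec_iff_det {m : Type*} [Fintype m] [DecidableEq m] (M : Matrix m m ℂ) (μ : ℂ) :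
    μ ∈ spectrum ℂ M ↔ (algebraMap ℂ (Matrix m m ℂ) μ - M).det = 0 := by
  rw [spectrum.mem_iff, Matrix.isUnit_iff_isUnit_det]
  simp [isUnit_iff_ne_zero]

lemma spec_mul_comm_nonzero {k l : ℕ} (X : Matrix (Fin k) (Fin l) ℂ)
    (Y : Matrix (Fin l) (Fin k) ℂ) (μ : ℂ) (hμ : μ ≠ 0) :
    μ ∈ spectrum ℂ (X * Y) ↔ μ ∈ spectrum ℂ (Y * X) := by
  rw [mem_spec_iff_det, mem_spec_iff_det]
  have e1 : algebraMap ℂ (Matrix (Fin k) (Fin k) ℂ) μ - X * Y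
      = μ • (1 - (μ⁻¹ • X) * Y) := by
    rw [Algebra.algebraMap_eq_smul_one, smul_sub, Matrix.smul_mul, smul_smul,
      mul_inv_cancel₀ hμ, one_smul]
  have e2 : algebraMap ℂ (Matrix (Fin l) (Fin l) ℂ) μ - Y * X
      = μ • (1 - Y * (μ⁻¹ • X)) := by
    rw [Algebra.algebraMap_eq_smul_one, smul_sub, Matrix.mul_smul, smul_smul,
      mul_inv_cancel₀ hμ, one_smul]
  rw [e1, e2, Matrix.det_smul, Matrix.det_smul, Matrix.det_one_sub_mul_comm]
  simp [hμ, mul_eq_zero, pow_eq_zero_iff']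

lemma specRad_image_aux {k : ℕ} (hk : 0 < k) (M : Matrix (Fin k) (Fin k) ℂ) :
    ((fun w : ℂ => ‖w‖) '' spectrum ℂ M).Nonempty ∧ BddAbove ((fun w : ℂ => ‖w‖) '' spectrum ℂ M) ∧
      ∀ x ∈ (fun w : ℂ => ‖w‖) '' spectrum ℂ M, 0 ≤ x := by
  haveI : Nonempty (Fin k) := ⟨⟨0, hk⟩⟩
  refine ⟨?_, ?_, ?_⟩
  · exact (spectrum.nonempty_of_isAlgClosed_of_finiteDimensional ℂ M).image _
  · exact ((Matrix.finite_spectrum M).image _).bddAbove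
  · rintro x ⟨μ, -, rfl⟩; exact norm_nonneg μ

lemma csSup_insert_zero {S : Set ℝ} (hne : S.Nonempty) (hbdd : BddAbove S)
    (hpos : ∀ x ∈ S, 0 ≤ x) : sSup (insert 0 S) = sSup S := by
  rw [csSup_insert hbdd hne]
  obtain ⟨x, hx⟩ := hne
  exact sup_eq_right.mpr (le_trans (hpos x hx) (le_csSup hbdd hx))

lemma specRad_mul_comm {k l : ℕ} (hk : 0 < k) (hl : 0 < l)
    (X : Matrix (Fin k) (Fin l) ℝ) (Y : Matrix (Fin l) (Fin k) ℝ) :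
    specRad (X * Y) = specRad (Y * X) := by
  have hmapXY : (X * Y).map (fun x => (x : ℂ)) =
      (X.map fun x => (x : ℂ)) * (Y.map fun x => (x : ℂ)) :=
    Matrix.map_mul (f := Complex.ofRealHom)
  have hmapYX : (Y * X).map (fun x => (x : ℂ)) =
      (Y.map fun x => (x : ℂ)) * (X.map fun x => (x : ℂ)) :=
    Matrix.map_mul (f := Complex.ofRealHom)
  set XC := X.map (fun x => (x : ℂ))
  set YC := Y.map (fun x => (x : ℂ))
  unfold specRad
  rw [hmapXY, hmapYX]
  obtain ⟨hne1, hbdd1, hpos1⟩ := specRad_image_aux hk (XC * YC)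
  obtain ⟨hne2, hbdd2, hpos2⟩ := specRad_image_aux hl (YC * XC)
  have hins : insert 0 ((fun w : ℂ => ‖w‖) '' spectrum ℂ (XC * YC))
      = insert 0 ((fun w : ℂ => ‖w‖) '' spectrum ℂ (YC * XC)) := by
    ext x
    simp only [Set.mem_insert_iff, Set.mem_image]
    constructor
    · rintro (rfl | ⟨μ, hμ, rfl⟩)
      · exact Or.inl rfl
      · rcases eq_or_ne μ 0 with rfl | hμ0
        · exact Or.inl (norm_zero)
        · exact Or.inr ⟨μ, (spec_mul_comm_nonzero XC YC μ hμ0).mp hμ, rfl⟩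
    · rintro (rfl | ⟨μ, hμ, rfl⟩)
      · exact Or.inl rfl
      · rcases eq_or_ne μ 0 with rfl | hμ0
        · exact Or.inl (norm_zero)
        · exact Or.inr ⟨μ, (spec_mul_comm_nonzero XC YC μ hμ0).mpr hμ, rfl⟩
  rw [← csSup_insert_zero hne1 hbdd1 hpos1, ← csSup_insert_zero hne2 hbdd2 hpos2, hins]

end Aux

section Factor

/-- Left factor `X = [I ; Pₙ⁻¹ cₙᵀ]`. -/
noncomputable def XmatAux {K N : ℕ} (C : Matrix (Fin N) (Fin K) ℝ) (phat : Fin N → ℝ)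
    (n : Fin N) : Matrix (Fin (K+1)) (Fin K) ℝ :=
  Matrix.of fun i k =>
    if hi : (i : ℕ) < K then (if (⟨i, hi⟩ : Fin K) = k then 1 else 0)
    else (phat n)⁻¹ * C n k

/-- Right factor `Y = [Γ V , Γ z]`. -/
noncomputable def YmatAux {K : ℕ} (V : Matrix (Fin K) (Fin K) ℝ) (z γ : Fin K → ℝ) :
    Matrix (Fin K) (Fin (K+1)) ℝ :=
  Matrix.of fun k j =>
    if hj : (j : ℕ) < K then γ k * V k ⟨j, hj⟩ else γ k * z k

lemma Amat_factor {K N : ℕ} (V : Matrix (Fin K) (Fin K) ℝ) (z γ : Fin K → ℝ)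
    (C : Matrix (Fin N) (Fin K) ℝ) (phat : Fin N → ℝ) (n : Fin N) :
    Amat V z γ C phat n = XmatAux C phat n * YmatAux V z γ := by
  ext i j
  rw [Matrix.mul_apply]
  simp only [Amat, XmatAux, YmatAux, Matrix.of_apply]
  by_cases hi : (i : ℕ) < K
  · simp only [hi, dif_pos]
    rw [Finset.sum_eq_single (⟨i, hi⟩ : Fin K)]
    · simp
    · intro b _ hb; simp [Ne.symm hb]
    · simp
  · simp only [hi, dif_neg, not_false_iff]
    by_cases hj : (j : ℕ) < K
    · simp only [hj, dif_pos]
      rw [Finset.mul_sum]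
      congr 1; ext k; ring
    · simp only [hj, dif_neg, not_false_iff]
      rw [Finset.mul_sum]
      congr 1; ext k; ring

lemma Bmat_factor {K N : ℕ} (V : Matrix (Fin K) (Fin K) ℝ) (z γ : Fin K → ℝ)
    (C : Matrix (Fin N) (Fin K) ℝ) (phat : Fin N → ℝ) (n : Fin N) :
    Bmat V z γ C phat n = YmatAux V z γ * XmatAux C phat n := by
  ext k l
  rw [Matrix.mul_apply, Fin.sum_univ_castSucc]
  simp only [Bmat, XmatAux, YmatAux, Matrix.of_apply, Matrix.diagonal_mul,
    Matrix.add_apply, Matrix.smul_apply, Matrix.vecMulVec_apply, smul_eq_mul]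
  have hlast : ¬ ((Fin.last K : Fin (K+1)) : ℕ) < K := by simp
  have hcast : ∀ j : Fin K, ((Fin.castSucc j : Fin (K+1)) : ℕ) < K := fun j => j.isLt
  rw [Finset.sum_congr rfl (fun j _ => ?_), dif_neg hlast, dif_neg hlast]
  · rw [Finset.sum_ite_eq' Finset.univ l (fun j => γ k * V k j)]
    simp only [Finset.mem_univ, if_pos]
    ring
  · have h1 : ((Fin.castSucc j : Fin (K+1)) : ℕ) < K := hcast j
    rw [dif_pos h1, dif_pos h1]
    have : (⟨((Fin.castSucc j : Fin (K+1)) : ℕ), h1⟩ : Fin K) = j := by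
      ext; simp
    rw [this, mul_ite, mul_one, mul_zero]

end Factor


theorem stmt8    {K N : ℕ} (hK : 2 ≤ K) (hN : 1 ≤ N)
    (V : Matrix (Fin K) (Fin K) ℝ) (z γ : Fin K → ℝ)
    (C : Matrix (Fin N) (Fin K) ℝ) (phat : Fin N → ℝ)
    (hV : ∀ i j, 0 ≤ V i j) (hVdiag : ∀ i, V i i = 0)
    (hz : ∀ k, 0 < z k) (hγ : ∀ k, 0 < γ k)
    (hC : ∀ n k, C n k = 0 ∨ C n k = 1) (hCcol : ∀ k, ∃ n, C n k = 1)
    (hphat : ∀ n, 0 < phat n)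
    (hirr : MatIrred V)
 :
    ∀ n, specRad (Amat V z γ C phat n) = specRad (Bmat V z γ C phat n) := by
  intro n
  have hK0 : 0 < K := lt_of_lt_of_le (by norm_num) hK
  rw [Amat_factor, Bmat_factor]
  exact specRad_mul_comm (Nat.succ_pos K) hK0 (XmatAux C phat n) (YmatAux V z γ)
end

section
/- Suppose the gain matrix V is irreducible. Let n₀ ∈ {1,…,N} be any index with ρ(B^(n₀)) = max_{1≤n≤N} ρ(B^(n)), and let p be the unique strictly positive vector satisfying B^(n₀) p = ρ(B^(n₀)) p and c_{n₀}ᵀ p = P_{n₀}. Then p ∈ P and p is the max-min SIR-balanced power vector, i.e., p maximizes q ↦ min_k SIR_k(q)/γ_k over P. -/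
open Matrix

section AuxCW
open Filter

attribute [local instance] Matrix.linftyOpNormedRing Matrix.linftyOpNormedAlgebra

private lemma mulVec_nonneg' {K : ℕ} {M : Matrix (Fin K) (Fin K) ℝ} (hM : ∀ i j, 0 ≤ M i j)
    {x : Fin K → ℝ} (hx : ∀ k, 0 ≤ x k) (k : Fin K) : 0 ≤ (M *ᵥ x) k := by
  rw [Matrix.mulVec, dotProduct]
  exact Finset.sum_nonneg fun j _ => mul_nonneg (hM k j) (hx j)

private lemma mulVec_mono' {K : ℕ} {M : Matrix (Fin K) (Fin K) ℝ} (hM : ∀ i j, 0 ≤ M i j)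
    {x y : Fin K → ℝ} (h : ∀ k, x k ≤ y k) (k : Fin K) : (M *ᵥ x) k ≤ (M *ᵥ y) k := by
  rw [Matrix.mulVec, Matrix.mulVec, dotProduct, dotProduct]
  exact Finset.sum_le_sum fun j _ => mul_le_mul_of_nonneg_left (h j) (hM k j)

private lemma pow_entry_nonneg' {K : ℕ} {M : Matrix (Fin K) (Fin K) ℝ} (hM : ∀ i j, 0 ≤ M i j)
    (m : ℕ) : ∀ i j, 0 ≤ (M ^ m) i j := by
  induction m with
  | zero => intro i j; simp [Matrix.one_apply]; split <;> norm_num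
  | succ m ih =>
    intro i j
    rw [pow_succ, Matrix.mul_apply]
    exact Finset.sum_nonneg fun l _ => mul_nonneg (ih i l) (hM l j)

private lemma subinv_pow' {K : ℕ} {M : Matrix (Fin K) (Fin K) ℝ} (hM : ∀ i j, 0 ≤ M i j)
    {q : Fin K → ℝ} (hq : ∀ k, 0 ≤ q k) {lam : ℝ} (hlam : 0 ≤ lam)
    (h : ∀ k, lam * q k ≤ (M *ᵥ q) k) (m : ℕ) (k : Fin K) :
    lam ^ m * q k ≤ ((M ^ m) *ᵥ q) k := by
  induction m with
  | zero => simp [Matrix.one_mulVec]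
  | succ m ih =>
    have h1 : ((M ^ (m+1)) *ᵥ q) k = ((M ^ m) *ᵥ (M *ᵥ q)) k := by
      rw [pow_succ, ← Matrix.mulVec_mulVec]
    have h2 : ((M ^ m) *ᵥ (fun j => lam * q j)) k ≤ ((M ^ m) *ᵥ (M *ᵥ q)) k :=
      mulVec_mono' (pow_entry_nonneg' hM m) h k
    have h3 : ((M ^ m) *ᵥ (fun j => lam * q j)) k = lam * ((M ^ m) *ᵥ q) k := by
      have := Matrix.mulVec_smul (M ^ m) lam q
      calc ((M ^ m) *ᵥ (fun j => lam * q j)) k = ((M ^ m) *ᵥ (lam • q)) k := rfl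
        _ = (lam • ((M ^ m) *ᵥ q)) k := by rw [this]
        _ = lam * ((M ^ m) *ᵥ q) k := rfl
    have h4 : lam ^ (m+1) * q k = lam * (lam ^ m * q k) := by ring
    rw [h1, h4]
    calc lam * (lam ^ m * q k) ≤ lam * (((M ^ m) *ᵥ q) k) :=
          mul_le_mul_of_nonneg_left (ih) hlam
      _ = ((M ^ m) *ᵥ (fun j => lam * q j)) k := h3.symm
      _ ≤ _ := h2

private lemma le_specRad' {K : ℕ} (hK : 0 < K) (M : Matrix (Fin K) (Fin K) ℝ)
    (hM : ∀ i j, 0 ≤ M i j) (q : Fin K → ℝ) (hq : ∀ k, 0 < q k)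
    (lam : ℝ) (hlam : 0 ≤ lam) (h : ∀ k, lam * q k ≤ (M *ᵥ q) k) :
    lam ≤ specRad M := by
  haveI : Nonempty (Fin K) := ⟨⟨0, hK⟩⟩
  set A : Matrix (Fin K) (Fin K) ℂ := M.map (fun x => (x : ℂ)) with hA
  have hpow : ∀ m : ℕ, A ^ m = (M ^ m).map (fun x => (x : ℂ)) := by
    intro m
    have h1 : A = Complex.ofRealHom.mapMatrix M := rfl
    rw [h1, ← map_pow]
    rfl
  have hnn : 0 ≤ specRad M := by
    apply Real.sSup_nonneg
    rintro x ⟨μ, -, rfl⟩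
    exact norm_nonneg μ
  rcases eq_or_lt_of_le hlam with hlam0 | hlampos
  · rw [← hlam0]; exact hnn
  set i₀ : Fin K := ⟨0, hK⟩
  have hne : (Finset.univ : Finset (Fin K)).Nonempty := ⟨i₀, Finset.mem_univ _⟩
  set Qmax := Finset.univ.sup' hne q with hQmax
  have hQmaxpos : 0 < Qmax := lt_of_lt_of_le (hq i₀) (Finset.le_sup' q (Finset.mem_univ i₀))
  set Qmin := Finset.univ.inf' hne q with hQmin
  have hQminpos : 0 < Qmin := by
    rw [hQmin, Finset.lt_inf'_iff]
    exact fun k _ => hq k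
  set c := Qmin / Qmax with hc
  have hcpos : 0 < c := div_pos hQminpos hQmaxpos
  have key : ∀ m : ℕ, c * lam ^ m ≤ ‖A ^ m‖ := by
    intro m
    have h1 : lam ^ m * q i₀ ≤ ((M ^ m) *ᵥ q) i₀ :=
      subinv_pow' hM (fun k => (hq k).le) hlam h m i₀
    have h2 : ((M ^ m) *ᵥ q) i₀ ≤ (∑ j, (M ^ m) i₀ j) * Qmax := by
      rw [Matrix.mulVec, dotProduct, Finset.sum_mul]
      exact Finset.sum_le_sum fun j _ => mul_le_mul_of_nonneg_left
        (Finset.le_sup' q (Finset.mem_univ j)) (pow_entry_nonneg' hM m i₀ j)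
    have h3 : ∑ j, (M ^ m) i₀ j ≤ ‖A ^ m‖ := by
      have hd := Matrix.linfty_opNNNorm_def (A ^ m)
      have h4 : ∑ j, ‖(A ^ m) i₀ j‖₊ ≤ ‖A ^ m‖₊ := hd ▸
        Finset.le_sup (f := fun i => ∑ j, ‖(A ^ m) i j‖₊) (Finset.mem_univ i₀)
      have h5 : ((∑ j, ‖(A ^ m) i₀ j‖₊ : NNReal) : ℝ) ≤ ‖A ^ m‖ := by
        exact_mod_cast NNReal.coe_le_coe.mpr h4
      refine le_trans (le_of_eq ?_) h5
      push_cast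
      refine Finset.sum_congr rfl fun j _ => ?_
      rw [hpow m]
      rw [show (M ^ m).map (fun x => (x:ℂ)) i₀ j = ((M ^ m) i₀ j : ℂ) from rfl]
      rw [Complex.norm_real, Real.norm_eq_abs, abs_of_nonneg (pow_entry_nonneg' hM m i₀ j)]
    have h6 : lam ^ m * Qmin ≤ lam ^ m * q i₀ :=
      mul_le_mul_of_nonneg_left (Finset.inf'_le q (Finset.mem_univ i₀)) (pow_nonneg hlam m)
    have h7 : c * lam ^ m = (lam ^ m * Qmin) / Qmax := by
      rw [hc]; ring
    calc c * lam ^ m = (lam ^ m * Qmin) / Qmax := h7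
      _ ≤ ((∑ j, (M ^ m) i₀ j) * Qmax) / Qmax := by
          have : lam ^ m * Qmin ≤ (∑ j, (M ^ m) i₀ j) * Qmax := by linarith
          exact div_le_div_of_nonneg_right this hQmaxpos.le
      _ = ∑ j, (M ^ m) i₀ j := by field_simp
      _ ≤ ‖A ^ m‖ := h3
  have hG := spectrum.pow_nnnorm_pow_one_div_tendsto_nhds_spectralRadius A
  have hc1 : Tendsto (fun m : ℕ => c ^ ((1 : ℝ) / m) * lam) atTop (nhds lam) := by
    have h1 : Tendsto (fun m : ℕ => (1 : ℝ) / m) atTop (nhds 0) :=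
      tendsto_one_div_atTop_nhds_zero_nat
    have h2 : ContinuousAt (fun x : ℝ => c ^ x) 0 :=
      Real.continuousAt_const_rpow hcpos.ne'
    have h3 : Tendsto (fun m : ℕ => c ^ ((1 : ℝ) / m)) atTop (nhds (c ^ (0 : ℝ))) :=
      (h2.tendsto.comp h1)
    rw [Real.rpow_zero] at h3
    simpa using h3.mul_const lam
  have hlow : Tendsto (fun m : ℕ => ENNReal.ofReal (c ^ ((1 : ℝ) / m) * lam)) atTop
      (nhds (ENNReal.ofReal lam)) :=
    (ENNReal.continuous_ofReal.continuousAt.tendsto.comp hc1)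
  have hle : ∀ᶠ m : ℕ in atTop,
      ENNReal.ofReal (c ^ ((1 : ℝ) / m) * lam) ≤ (‖A ^ m‖₊ : ENNReal) ^ ((1 : ℝ) / m) := by
    filter_upwards [eventually_ge_atTop 1] with m hm
    have hm0 : (m : ℝ) ≠ 0 := by positivity
    have hnorm_pos : 0 ≤ ‖A ^ m‖ := norm_nonneg _
    have hstep : (c * lam ^ m) ^ ((1 : ℝ) / m) ≤ ‖A ^ m‖ ^ ((1 : ℝ) / m) :=
      Real.rpow_le_rpow (by positivity) (key m) (by positivity)
    have hLHS : (c * lam ^ m) ^ ((1 : ℝ) / m) = c ^ ((1 : ℝ) / m) * lam := by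
      rw [Real.mul_rpow hcpos.le (by positivity), ← Real.rpow_natCast lam m,
        ← Real.rpow_mul hlam]
      congr 1
      rw [mul_one_div, div_self hm0, Real.rpow_one]
    have hfin : (‖A ^ m‖₊ : ENNReal) ^ ((1 : ℝ) / m)
        = ENNReal.ofReal (‖A ^ m‖ ^ ((1 : ℝ) / m)) := by
      rw [← ENNReal.ofReal_rpow_of_nonneg hnorm_pos (by positivity), ofReal_norm, enorm_eq_nnnorm]
    rw [hfin]
    exact ENNReal.ofReal_le_ofReal (hLHS ▸ hstep)
  have hfinal : ENNReal.ofReal lam ≤ spectralRadius ℂ A :=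
    le_of_tendsto_of_tendsto hlow hG hle
  have hNOC : NormOneClass (Matrix (Fin K) (Fin K) ℂ) := Matrix.linfty_opNormOneClass
  have hbdd : BddAbove ((fun w : ℂ => ‖w‖) '' spectrum ℂ A) := by
    refine ⟨‖A‖, ?_⟩
    rintro x ⟨μ, hμ, rfl⟩
    exact spectrum.norm_le_norm_of_mem hμ
  have hsr : spectralRadius ℂ A ≤ ENNReal.ofReal (specRad M) := by
    have hrfl : spectralRadius ℂ A = ⨆ μ ∈ spectrum ℂ A, (‖μ‖₊ : ENNReal) := rfl
    rw [hrfl]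
    refine iSup₂_le fun μ hμ => ?_
    have h1 : ‖μ‖ ≤ specRad M :=
      le_csSup hbdd (Set.mem_image_of_mem _ hμ)
    rw [← enorm_eq_nnnorm, ← ofReal_norm]
    exact ENNReal.ofReal_le_ofReal h1
  exact (ENNReal.ofReal_le_ofReal_iff hnn).mp (le_trans hfinal hsr)

private lemma Bmat_mulVec' {K N : ℕ} (V : Matrix (Fin K) (Fin K) ℝ) (z γ : Fin K → ℝ)
    (C : Matrix (Fin N) (Fin K) ℝ) (phat : Fin N → ℝ) (n : Fin N) (x : Fin K → ℝ) (k : Fin K) :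
    (Bmat V z γ C phat n *ᵥ x) k = γ k * ((V *ᵥ x) k + (phat n)⁻¹ * (C.mulVec x n) * z k) := by
  have hent : ∀ j, Bmat V z γ C phat n k j = γ k * (V k j + (phat n)⁻¹ * (z k * C n j)) := by
    intro j
    rw [Bmat, Matrix.diagonal_mul, Matrix.add_apply, Matrix.smul_apply,
      Matrix.vecMulVec_apply, smul_eq_mul]
  rw [Matrix.mulVec, dotProduct]
  simp only [hent, Matrix.mulVec, dotProduct, Finset.mul_sum, Finset.sum_mul, mul_add, add_mul]
  rw [← Finset.sum_add_distrib]
  exact Finset.sum_congr rfl fun j _ => by ring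

private lemma Bmat_nonneg' {K N : ℕ} (V : Matrix (Fin K) (Fin K) ℝ) (z γ : Fin K → ℝ)
    (C : Matrix (Fin N) (Fin K) ℝ) (phat : Fin N → ℝ) (n : Fin N)
    (hV : ∀ i j, 0 ≤ V i j) (hz : ∀ k, 0 < z k) (hγ : ∀ k, 0 < γ k)
    (hC : ∀ n k, C n k = 0 ∨ C n k = 1) (hphat : ∀ n, 0 < phat n) :
    ∀ i j, 0 ≤ Bmat V z γ C phat n i j := by
  intro i j
  have hCnn : 0 ≤ C n j := by rcases hC n j with h | h <;> rw [h] <;> norm_num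
  rw [Bmat, Matrix.diagonal_mul, Matrix.add_apply, Matrix.smul_apply,
    Matrix.vecMulVec_apply, smul_eq_mul]
  have h1 : 0 ≤ (phat n)⁻¹ * (z i * C n j) :=
    mul_nonneg (inv_nonneg.mpr (hphat n).le) (mul_nonneg (hz i).le hCnn)
  exact mul_nonneg (hγ i).le (add_nonneg (hV i j) h1)

end AuxCW

theorem stmt10    {K N : ℕ} (hK : 2 ≤ K) (hN : 1 ≤ N)
    (V : Matrix (Fin K) (Fin K) ℝ) (z γ : Fin K → ℝ)
    (C : Matrix (Fin N) (Fin K) ℝ) (phat : Fin N → ℝ)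
    (hV : ∀ i j, 0 ≤ V i j) (hVdiag : ∀ i, V i i = 0)
    (hz : ∀ k, 0 < z k) (hγ : ∀ k, 0 < γ k)
    (hC : ∀ n k, C n k = 0 ∨ C n k = 1) (hCcol : ∀ k, ∃ n, C n k = 1)
    (hphat : ∀ n, 0 < phat n)
    (hirr : MatIrred V)
    (n₀ : Fin N) (hn₀ : ∀ n, specRad (Bmat V z γ C phat n) ≤ specRad (Bmat V z γ C phat n₀))
    (p : Fin K → ℝ) (hp : ∀ k, 0 < p k)
    (heig : (Bmat V z γ C phat n₀) *ᵥ p = specRad (Bmat V z γ C phat n₀) • p)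
    (hnorm : C.mulVec p n₀ = phat n₀) :
    MaxMinBalanced V z γ C phat p := by
  classical
  have hK0 : 0 < K := by omega
  haveI : Nonempty (Fin K) := ⟨⟨0, hK0⟩⟩
  have hne : (Finset.univ : Finset (Fin K)).Nonempty := ⟨⟨0, hK0⟩, Finset.mem_univ _⟩
  set ρ := specRad (Bmat V z γ C phat n₀) with hρdef
  have heq : ∀ k, ρ * p k = γ k * ((V *ᵥ p) k + z k) := by
    intro k
    have h1 := congrFun heig k
    rw [Bmat_mulVec' V z γ C phat n₀ p k, hnorm, inv_mul_cancel₀ (hphat n₀).ne'] at h1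
    rw [Pi.smul_apply, smul_eq_mul] at h1
    rw [← h1]
    ring
  have hρpos : 0 < ρ := by
    have h0 := heq ⟨0, hK0⟩
    have h1 : 0 ≤ (V *ᵥ p) ⟨0, hK0⟩ := mulVec_nonneg' hV (fun k => (hp k).le) _
    nlinarith [hγ ⟨0, hK0⟩, hz ⟨0, hK0⟩, hp ⟨0, hK0⟩]
  -- membership in the polytope
  have hmem : p ∈ Pset C phat := by
    refine ⟨fun k => (hp k).le, fun n => ?_⟩
    by_contra hcon
    push_neg at hcon
    set t := C.mulVec p n / phat n with ht_def
    have ht : 1 < t := (one_lt_div (hphat n)).2 hcon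
    set ε := (t - 1) * Finset.univ.inf' hne (fun k => γ k * z k / p k) with hε_def
    have hinfpos : 0 < Finset.univ.inf' hne (fun k => γ k * z k / p k) := by
      rw [Finset.lt_inf'_iff]
      exact fun k _ => div_pos (mul_pos (hγ k) (hz k)) (hp k)
    have hεpos : 0 < ε := mul_pos (by linarith) hinfpos
    have hineq : ∀ k, (ρ + ε) * p k ≤ (Bmat V z γ C phat n *ᵥ p) k := by
      intro k
      rw [Bmat_mulVec' V z γ C phat n p k]
      have hcv : (phat n)⁻¹ * C.mulVec p n = t := by
        rw [ht_def, div_eq_inv_mul]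
      rw [hcv]
      have hεk : ε * p k ≤ (t - 1) * (γ k * z k) := by
        have h1 : Finset.univ.inf' hne (fun k => γ k * z k / p k) ≤ γ k * z k / p k :=
          Finset.inf'_le _ (Finset.mem_univ k)
        have h2 : Finset.univ.inf' hne (fun k => γ k * z k / p k) * p k ≤ γ k * z k := by
          rw [← le_div_iff₀ (hp k)]
          exact h1
        calc ε * p k
            = (t - 1) * (Finset.univ.inf' hne (fun k => γ k * z k / p k) * p k) := by
              rw [hε_def]; ring
          _ ≤ (t - 1) * (γ k * z k) := mul_le_mul_of_nonneg_left h2 (by linarith)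
      have hk := heq k
      nlinarith [hγ k, hz k, hp k]
    have hle := le_specRad' hK0 (Bmat V z γ C phat n)
      (Bmat_nonneg' V z γ C phat n hV hz hγ hC hphat) p hp (ρ + ε)
      (by linarith) hineq
    linarith [hn₀ n]
  refine ⟨hmem, ?_⟩
  intro q hq
  -- the balanced value
  have hSIRp : ∀ k, SIR V z p k / γ k = 1 / ρ := by
    intro k
    have hd : 0 < (V *ᵥ p) k + z k :=
      add_pos_of_nonneg_of_pos (mulVec_nonneg' hV (fun j => (hp j).le) k) (hz k)
    rw [SIR, div_div]
    have h1 : ((V.mulVec p) k + z k) * γ k = ρ * p k := by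
      rw [mul_comm]; exact (heq k).symm
    rw [h1, mul_comm ρ (p k), ← div_div, div_self (hp k).ne']
  have hRHS : (⨅ k, SIR V z p k / γ k) = 1 / ρ := by
    simp only [hSIRp]
    exact ciInf_const
  rw [hRHS]
  by_contra hgt
  push_neg at hgt
  have hbdd : BddBelow (Set.range fun k => SIR V z q k / γ k) :=
    Set.Finite.bddBelow (Set.finite_range _)
  have hqk : ∀ k, 1 / ρ < SIR V z q k / γ k :=
    fun k => lt_of_lt_of_le hgt (ciInf_le hbdd k)
  have hden : ∀ k, 0 < (V *ᵥ q) k + z k :=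
    fun k => add_pos_of_nonneg_of_pos (mulVec_nonneg' hV hq.1 k) (hz k)
  have hstr : ∀ k, γ k * ((V *ᵥ q) k + z k) < ρ * q k := by
    intro k
    have h1 := hqk k
    rw [SIR, div_div] at h1
    have hD : 0 < ((V.mulVec q) k + z k) * γ k := mul_pos (hden k) (hγ k)
    have h2 := (div_lt_div_iff₀ hρpos hD).mp h1
    nlinarith
  have hqpos : ∀ k, 0 < q k := by
    intro k
    have h1 : 0 < ρ * q k := lt_trans (mul_pos (hγ k) (hden k)) (hstr k)
    nlinarith
  -- minimal ratio
  obtain ⟨k₀, -, hk₀⟩ := Finset.exists_mem_eq_inf' hne (fun k => q k / p k)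
  set u := Finset.univ.inf' hne (fun k => q k / p k) with hu_def
  have hup : ∀ k, u * p k ≤ q k := by
    intro k
    have h1 : u ≤ q k / p k := Finset.inf'_le _ (Finset.mem_univ k)
    exact (le_div_iff₀ (hp k)).mp h1
  have huq : q k₀ = u * p k₀ := by
    rw [hk₀, div_mul_cancel₀ _ (hp k₀).ne']
  have hu1 : 1 < u := by
    have h1 : u * (V *ᵥ p) k₀ ≤ (V *ᵥ q) k₀ := by
      have := mulVec_mono' hV hup k₀
      have h2 : (V *ᵥ (fun j => u * p j)) k₀ = u * (V *ᵥ p) k₀ := by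
        calc (V *ᵥ (fun j => u * p j)) k₀ = (V *ᵥ (u • p)) k₀ := rfl
          _ = (u • (V *ᵥ p)) k₀ := by rw [Matrix.mulVec_smul]
          _ = u * (V *ᵥ p) k₀ := rfl
      rw [← h2]
      exact this
    have h3 := hstr k₀
    have h4 := heq k₀
    have h5 : ρ * q k₀ = u * (γ k₀ * ((V *ᵥ p) k₀ + z k₀)) := by
      rw [huq, ← h4]; ring
    have h6 : γ k₀ * (u * (V *ᵥ p) k₀) ≤ γ k₀ * (V *ᵥ q) k₀ :=
      mul_le_mul_of_nonneg_left h1 (hγ k₀).le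
    nlinarith [mul_pos (hγ k₀) (hz k₀)]
  have hrow : ∃ j, C n₀ j = 1 := by
    by_contra hno
    push_neg at hno
    have hz0 : C.mulVec p n₀ = 0 := by
      rw [Matrix.mulVec, dotProduct]
      refine Finset.sum_eq_zero fun j _ => ?_
      rcases hC n₀ j with h | h
      · rw [h, zero_mul]
      · exact absurd h (hno j)
    rw [hz0] at hnorm
    exact absurd hnorm.symm (hphat n₀).ne'
  obtain ⟨j₀, hj₀⟩ := hrow
  have hlt : ∀ j, p j < q j := by
    intro j
    have h1 : p j < u * p j := by nlinarith [hp j]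
    exact lt_of_lt_of_le h1 (hup j)
  have hgt2 : phat n₀ < C.mulVec q n₀ := by
    rw [← hnorm, Matrix.mulVec, Matrix.mulVec, dotProduct, dotProduct]
    refine Finset.sum_lt_sum (fun j _ => ?_) ⟨j₀, Finset.mem_univ j₀, ?_⟩
    · rcases hC n₀ j with h | h
      · rw [h, zero_mul, zero_mul]
      · rw [h, one_mul, one_mul]; exact (hlt j).le
    · rw [hj₀, one_mul, one_mul]; exact hlt j₀
  exact absurd (hq.2 n₀) (not_le.2 hgt2)
end
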